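/- arXiv:2309.07363 — 6 statements merged into one kernel-verified Lean document; each statement's English description precedes it below -/
import Mathlib

section
/- Let Θ and X be finite nonempty sets, u : X × Θ → ℝ, and let x : Θ → Δ(X) be a cyclically monotone social choice function. Fix a quota q ∈ Δ(Θ) and an integer K ≥ 1, and fix a type vector θ = (θ^1,…,θ^K) ∈ Θ^K. Then there exists a feasible report vector r = (r^1,…,r^K) at quota q that maximizes the payoff (1/K)·Σ_k ū(x(r^k),θ^k) among all feasible report vectors at quota q, and that satisfies (1/K)·Σ_{k=1}^K ‖x(r^k) − x(θ^k)‖ ≤ (|Θ| − 1)·‖q − marg θ‖. -/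
open Finset

/-- `p` is a probability vector on the finite set `Z`. -/
def IsProbVec {Z : Type*} [Fintype Z] (p : Z → ℝ) : Prop :=
  (∀ z, 0 ≤ p z) ∧ ∑ z, p z = 1

/-- Total variation distance `‖p − q‖ = (1/2)·Σ_z |p z − q z|`. -/
noncomputable def tv {Z : Type*} [Fintype Z] (p q : Z → ℝ) : ℝ :=
  (∑ z, |p z - q z|) / 2

/-- Lifted utility: `ū(μ,θ) = Σ_a μ(a)·u(a,θ)` for a lottery `μ ∈ Δ(X)`. -/
noncomputable def ubar {Θ X : Type*} [Fintype X]
    (u : X × Θ → ℝ) (μ : X → ℝ) (θ : Θ) : ℝ :=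
  ∑ a, μ a * u (a, θ)

/-- Linear extension of the social choice function `x : Θ → Δ(X)` to `Δ(Θ)`:
`x(r) = Σ_{θ'} r(θ')·x(θ')`. -/
noncomputable def liftSCF {Θ X : Type*} [Fintype Θ]
    (x : Θ → X → ℝ) (r : Θ → ℝ) : X → ℝ :=
  fun a => ∑ θ', r θ' * x θ' a

/-- `x : Θ → Δ(X)` is cyclically monotone for the utility `u`. -/
def CyclMonoSCF {Θ X : Type*} [Fintype X] (u : X × Θ → ℝ) (x : Θ → X → ℝ) : Prop :=
  ∀ J : ℕ, ∀ θs : Fin (J + 2) → Θ, Function.Injective θs →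
    ∑ j, ubar u (x (θs (j + 1))) (θs j) ≤ ∑ j, ubar u (x (θs j)) (θs j)

/-- `r = (r^1,…,r^K)` is a feasible report vector at quota `q`:
each `r^k ∈ Δ(Θ)` and `(1/K)·Σ_k r^k = q`. -/
def Feasible {Θ : Type*} [Fintype Θ] (K : ℕ) (q : Θ → ℝ)
    (r : Fin K → Θ → ℝ) : Prop :=
  (∀ k, IsProbVec (r k)) ∧ ∀ θ', (∑ k, r k θ') / K = q θ'

/-- Payoff of the report vector `r` at the type vector `θv`:
`(1/K)·Σ_k ū(x(r^k),θ^k)`. -/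
noncomputable def payoff {Θ X : Type*} [Fintype Θ] [Fintype X]
    (u : X × Θ → ℝ) (x : Θ → X → ℝ) (K : ℕ)
    (θv : Fin K → Θ) (r : Fin K → Θ → ℝ) : ℝ :=
  (∑ k, ubar u (liftSCF x (r k)) (θv k)) / K

/-- Empirical distribution of a type vector: `(marg θ)(θ') = |{k : θ^k = θ'}|/K`. -/
noncomputable def marg {Θ : Type*} [Fintype Θ] [DecidableEq Θ] (K : ℕ)
    (θv : Fin K → Θ) : Θ → ℝ :=
  fun θ' => ((Finset.univ.filter (fun k => θv k = θ')).card : ℝ) / K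

lemma tv_le_one {Z : Type*} [Fintype Z] {p q : Z → ℝ}
    (hp : IsProbVec p) (hq : IsProbVec q) : tv p q ≤ 1 := by
  have h : ∑ z, |p z - q z| ≤ ∑ z, (p z + q z) := by
    apply Finset.sum_le_sum
    intro z _
    have := abs_sub_abs_le_abs_sub (p z) (q z)
    calc |p z - q z| ≤ |p z| + |q z| := abs_sub _ _
      _ = p z + q z := by rw [abs_of_nonneg (hp.1 z), abs_of_nonneg (hq.1 z)]
  rw [tv]
  have : ∑ z, (p z + q z) = 2 := by rw [Finset.sum_add_distrib, hp.2, hq.2]; norm_num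
  linarith

lemma ubar_lift {Θ X : Type*} [Fintype Θ] [Fintype X]
    (u : X × Θ → ℝ) (x : Θ → X → ℝ) (p : Θ → ℝ) (θ : Θ) :
    ubar u (liftSCF x p) θ = ∑ t, p t * ubar u (x t) θ := by
  simp only [ubar, liftSCF, Finset.sum_mul]
  rw [Finset.sum_comm]
  refine Finset.sum_congr rfl fun t _ => ?_
  rw [Finset.mul_sum]
  exact Finset.sum_congr rfl fun a _ => by ring

lemma tv_lift_le {Θ X : Type*} [Fintype Θ] [Fintype X] [DecidableEq Θ]
    (x : Θ → X → ℝ) (hx : ∀ θ, IsProbVec (x θ)) {p : Θ → ℝ}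
    (hp : IsProbVec p) (θ : Θ) :
    tv (liftSCF x p) (x θ) ≤ 1 - p θ := by
  have key : tv (liftSCF x p) (x θ) ≤ ∑ t, p t * tv (x t) (x θ) := by
    rw [tv]
    have h1 : ∀ a, |liftSCF x p a - x θ a| ≤ ∑ t, p t * |x t a - x θ a| := by
      intro a
      have : liftSCF x p a - x θ a = ∑ t, p t * (x t a - x θ a) := by
        simp only [liftSCF, mul_sub]
        rw [Finset.sum_sub_distrib, ← Finset.sum_mul, hp.2, one_mul]
      rw [this]
      refine (Finset.abs_sum_le_sum_abs _ _).trans ?_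
      apply Finset.sum_le_sum
      intro t _
      rw [abs_mul, abs_of_nonneg (hp.1 t)]
    calc (∑ a, |liftSCF x p a - x θ a|) / 2
        ≤ (∑ a, ∑ t, p t * |x t a - x θ a|) / 2 := by
          gcongr
          exact h1 _
      _ = ∑ t, p t * tv (x t) (x θ) := by
          rw [Finset.sum_comm, Finset.sum_div]
          congr 1; ext t
          rw [tv, ← Finset.mul_sum, mul_div_assoc]
  refine key.trans ?_
  have : ∑ t, p t * tv (x t) (x θ) = ∑ t ∈ univ.erase θ, p t * tv (x t) (x θ) := by
    rw [eq_comm]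
    apply Finset.sum_erase
    simp [tv]
  rw [this]
  have h2 : ∑ t ∈ univ.erase θ, p t * tv (x t) (x θ) ≤ ∑ t ∈ univ.erase θ, p t := by
    apply Finset.sum_le_sum
    intro t _
    calc p t * tv (x t) (x θ) ≤ p t * 1 := by
          apply mul_le_mul_of_nonneg_left (tv_le_one (hx t) (hx θ)) (hp.1 t)
      _ = p t := mul_one _
  refine h2.trans ?_
  have := Finset.sum_erase_add univ p (Finset.mem_univ θ)
  rw [hp.2] at this
  linarith

section Walks
variable {Θ : Type*}

lemma no_closed_walk (R : Θ → Θ → Prop)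
    (hirr : ∀ a, ¬ R a a)
    (hsc : ∀ n, 2 ≤ n → ∀ f : ℕ → Θ, (∀ i j, i < n → j < n → f i = f j → i = j) →
      (∀ i, i < n → R (f i) (f (i+1))) → f n ≠ f 0) :
    ∀ n, 1 ≤ n → ∀ f : ℕ → Θ, (∀ i, i < n → R (f i) (f (i+1))) → f n ≠ f 0 := by
  intro n
  induction n using Nat.strong_induction_on with
  | _ n IH =>
    intro hn f hf hclosed
    by_cases hinj : ∀ i j, i < n → j < n → f i = f j → i = j
    · rcases Nat.lt_or_ge n 2 with h2 | h2
      · have hn1 : n = 1 := by omega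
        subst hn1
        have := hf 0 (by norm_num)
        rw [hclosed] at this
        exact hirr (f 0) this
      · exact hsc n h2 f hinj hf hclosed
    · push_neg at hinj
      obtain ⟨i, j, hi, hj, hfij, hij⟩ := hinj
      have key : ∀ i j : ℕ, i < j → j < n → f i = f j → False := by
        intro i j hij hjn hfe
        have h1 : 1 ≤ j - i := by omega
        have h2 : j - i < n := by omega
        refine IH (j - i) h2 h1 (fun t => f (i + t)) ?_ ?_
        · intro t ht
          show R (f (i + t)) (f (i + (t + 1)))
          rw [← Nat.add_assoc]
          exact hf (i + t) (by omega)
        · show f (i + (j - i)) = f (i + 0)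
          rw [Nat.add_sub_cancel' (by omega), add_zero]
          exact hfe.symm
      rcases Nat.lt_or_ge i j with h | h
      · exact key i j h hj hfij
      · exact key j i (by omega) hi hfij.symm

lemma transGen_walk (R : Θ → Θ → Prop) {a b : Θ} (h : Relation.TransGen R a b) :
    ∃ n, 1 ≤ n ∧ ∃ f : ℕ → Θ, f 0 = a ∧ f n = b ∧ ∀ i, i < n → R (f i) (f (i+1)) := by
  induction h with
  | @single c hr =>
    refine ⟨1, le_refl 1, fun i => if i = 0 then a else c, by simp, by simp, ?_⟩
    intro i hi
    interval_cases i
    simpa using hr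
  | @tail b' c hab hr IH =>
    obtain ⟨n, hn, f, hf0, hfn, hstep⟩ := IH
    refine ⟨n + 1, by omega, fun i => if i = n + 1 then c else f i, ?_, by simp, ?_⟩
    · simp only [if_neg (by omega : ¬(0 = n + 1))]; exact hf0
    · intro i hi
      rcases Nat.lt_or_ge i n with h' | h'
      · simp only [if_neg (by omega : ¬(i = n + 1)), if_neg (by omega : ¬(i + 1 = n + 1))]
        exact hstep i h'
      · have : i = n := by omega
        subst this
        simp only [if_neg (by omega : ¬(i = i + 1)), if_pos rfl]
        rw [hfn]
        exact hr

lemma exists_rank [Fintype Θ] [DecidableEq Θ] (R : Θ → Θ → Prop)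
    (h : ∀ a, ¬ Relation.TransGen R a a) :
    ∃ ρ : Θ → ℕ, (∀ s t, R s t → ρ s < ρ t) ∧ ∀ s, ρ s + 1 ≤ Fintype.card Θ := by
  classical
  refine ⟨fun s => (Finset.univ.filter (fun t => Relation.TransGen R t s)).card, ?_, ?_⟩
  · intro s t hst
    apply Finset.card_lt_card
    constructor
    · intro u hu
      simp only [Finset.mem_filter, Finset.mem_univ, true_and] at hu ⊢
      exact hu.tail hst
    · intro hsub
      have hs : s ∈ Finset.univ.filter (fun u => Relation.TransGen R u t) := by
        simp only [Finset.mem_filter, Finset.mem_univ, true_and]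
        exact Relation.TransGen.single hst
      have := hsub hs
      simp only [Finset.mem_filter, Finset.mem_univ, true_and] at this
      exact h s this
  · intro s
    have hs : s ∉ Finset.univ.filter (fun t => Relation.TransGen R t s) := by
      simp only [Finset.mem_filter, Finset.mem_univ, true_and]
      exact h s
    have : Finset.univ.filter (fun t => Relation.TransGen R t s) ⊂ Finset.univ :=
      Finset.ssubset_univ_iff.2 (fun he => hs (by rw [he]; exact Finset.mem_univ s))
    have := Finset.card_lt_card this
    rw [Finset.card_univ] at this
    exact Nat.succ_le_of_lt this

end Walks

section Exchange

variable {Θ X : Type*} [Fintype Θ] [Fintype X] [DecidableEq Θ]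

/-- indicator of the pair (a,b) at (s,t), in product form -/
noncomputable def ind (a b s t : Θ) : ℝ :=
  (if a = s then (1:ℝ) else 0) * (if b = t then 1 else 0)

lemma ind_sum_t (a b s : Θ) : ∑ t, ind a b s t = if a = s then 1 else 0 := by
  simp [ind, ← Finset.mul_sum]

lemma ind_sum_s (a b t : Θ) : ∑ s, ind a b s t = if b = t then 1 else 0 := by
  simp [ind, ← Finset.sum_mul]

lemma ind_sum_c (a b : Θ) (c : Θ → Θ → ℝ) : ∑ s, ∑ t, ind a b s t * c s t = c a b := by
  simp [ind, mul_assoc, ite_mul, zero_mul, one_mul, Finset.sum_ite_eq]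

lemma ind_sum_diag (a b : Θ) : ∑ s, ind a b s s = if a = b then 1 else 0 := by
  simp only [ind]
  rw [Finset.sum_eq_single a]
  · by_cases h : a = b <;> simp [h, eq_comm]
  · intro s _ hs
    simp [Ne.symm hs]
  · simp

lemma fin_ne_add_one {J : ℕ} (j : Fin (J + 2)) : j ≠ j + 1 := by
  intro h
  have h2 := congrArg Fin.val h
  rw [Fin.val_add, Fin.val_one] at h2
  rcases Nat.lt_or_ge (j.val + 1) (J + 2) with hlt | hge
  · rw [Nat.mod_eq_of_lt hlt] at h2; omega
  · have hj := j.isLt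
    have : j.val + 1 = J + 2 := by omega
    rw [this, Nat.mod_self] at h2
    omega

lemma exchange (u : X × Θ → ℝ) (x : Θ → X → ℝ)
    (hcm : CyclMonoSCF u x) (γ : Θ → Θ → ℝ)
    (hpos : ∀ s t, 0 ≤ γ s t) (J : ℕ) (g : Fin (J + 2) → Θ) (hg : Function.Injective g)
    (hcyc : ∀ j, 0 < γ (g j) (g (j + 1))) :
    ∃ γ' : Θ → Θ → ℝ, (∀ s t, 0 ≤ γ' s t) ∧ (∀ s, ∑ t, γ' s t = ∑ t, γ s t) ∧
      (∀ t, ∑ s, γ' s t = ∑ s, γ s t) ∧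
      (∑ s, ∑ t, γ s t * ubar u (x t) s ≤ ∑ s, ∑ t, γ' s t * ubar u (x t) s) ∧
      (∑ s, γ s s < ∑ s, γ' s s) := by
  have hne : Finset.univ.Nonempty (α := Fin (J + 2)) := Finset.univ_nonempty
  set ε : ℝ := Finset.univ.inf' hne (fun j => γ (g j) (g (j + 1))) with hε_def
  have hε : 0 < ε := by
    rw [Finset.lt_inf'_iff]
    exact fun j _ => hcyc j
  have hgne : ∀ j : Fin (J + 2), g j ≠ g (j + 1) := by
    intro j h
    exact fin_ne_add_one j (hg h)
  refine ⟨fun s t => γ s t + ε * ∑ j, (ind (g j) (g j) s t - ind (g j) (g (j + 1)) s t),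
    ?_, ?_, ?_, ?_, ?_⟩
  · -- nonnegativity
    intro s t
    show 0 ≤ γ s t + ε * ∑ j, (ind (g j) (g j) s t - ind (g j) (g (j + 1)) s t)
    by_cases hs : ∃ j0, g j0 = s
    · obtain ⟨j0, hj0⟩ := hs
      have hsingle : ∑ j, (ind (g j) (g j) s t - ind (g j) (g (j + 1)) s t) =
          ind (g j0) (g j0) s t - ind (g j0) (g (j0 + 1)) s t := by
        apply Finset.sum_eq_single j0
        · intro j _ hj
          have : g j ≠ s := fun h => hj (hg (h.trans hj0.symm))
          simp [ind, this]
        · simp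
      rw [hsingle]
      by_cases ht : g j0 = t
      · have h2' : g (j0 + 1) ≠ t := by
          intro h; exact hgne j0 (by rw [ht, h])
        simp only [ind, if_pos hj0, if_pos ht, if_neg h2']
        have : (1:ℝ) * 1 - 1 * 0 = 1 := by ring
        rw [this]
        nlinarith [hpos s t]
      · by_cases h2 : g (j0 + 1) = t
        · simp only [ind, if_pos hj0, if_neg ht, if_pos h2]
          have : (1:ℝ) * 0 - 1 * 1 = -1 := by ring
          rw [this]
          have hle : ε ≤ γ (g j0) (g (j0 + 1)) := Finset.inf'_le _ (Finset.mem_univ j0)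
          rw [← hj0, ← h2]
          linarith
        · simp only [ind, if_pos hj0, if_neg ht, if_neg h2]
          have : (1:ℝ) * 0 - 1 * 0 = 0 := by ring
          rw [this]
          simpa using hpos s t
    · push_neg at hs
      have : ∑ j, (ind (g j) (g j) s t - ind (g j) (g (j + 1)) s t) = 0 := by
        apply Finset.sum_eq_zero
        intro j _
        simp [ind, hs j]
      rw [this]
      simpa using hpos s t
  · -- row sums
    intro s
    rw [Finset.sum_add_distrib, ← Finset.mul_sum, Finset.sum_comm]
    have : ∑ j : Fin (J + 2), ∑ t, (ind (g j) (g j) s t - ind (g j) (g (j + 1)) s t) = 0 := by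
      apply Finset.sum_eq_zero
      intro j _
      rw [Finset.sum_sub_distrib, ind_sum_t, ind_sum_t, sub_self]
    rw [this, mul_zero, add_zero]
  · -- column sums
    intro t
    rw [Finset.sum_add_distrib, ← Finset.mul_sum, Finset.sum_comm]
    have : ∑ j : Fin (J + 2), ∑ s, (ind (g j) (g j) s t - ind (g j) (g (j + 1)) s t) = 0 := by
      have h1 : ∀ j : Fin (J + 2), ∑ s, (ind (g j) (g j) s t - ind (g j) (g (j + 1)) s t)
          = (if g j = t then (1:ℝ) else 0) - (if g (j + 1) = t then 1 else 0) := by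
        intro j
        rw [Finset.sum_sub_distrib, ind_sum_s, ind_sum_s]
      rw [Finset.sum_congr rfl (fun j _ => h1 j), Finset.sum_sub_distrib]
      have h2 : ∑ j : Fin (J + 2), (if g (j + 1) = t then (1:ℝ) else 0)
          = ∑ j : Fin (J + 2), (if g j = t then (1:ℝ) else 0) := by
        apply Fintype.sum_equiv (Equiv.addRight (1 : Fin (J + 2)))
        intro j
        simp [Equiv.coe_addRight]
        rfl
      rw [h2, sub_self]
    rw [this, mul_zero, add_zero]
  · -- value does not decrease
    have hexp : ∑ s, ∑ t,
        (γ s t + ε * ∑ j, (ind (g j) (g j) s t - ind (g j) (g (j + 1)) s t)) * ubar u (x t) s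
        = (∑ s, ∑ t, γ s t * ubar u (x t) s) +
          ε * ∑ j : Fin (J + 2), (ubar u (x (g j)) (g j) - ubar u (x (g (j + 1))) (g j)) := by
      have key : ∀ j : Fin (J + 2),
          ∑ s, ∑ t, (ind (g j) (g j) s t - ind (g j) (g (j + 1)) s t) * ubar u (x t) s
          = ubar u (x (g j)) (g j) - ubar u (x (g (j + 1))) (g j) := by
        intro j
        have := ind_sum_c (g j) (g j) (fun s t => ubar u (x t) s)
        have h2 := ind_sum_c (g j) (g (j + 1)) (fun s t => ubar u (x t) s)
        simp only [sub_mul, Finset.sum_sub_distrib]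
        rw [this, h2]
      calc ∑ s, ∑ t,
          (γ s t + ε * ∑ j, (ind (g j) (g j) s t - ind (g j) (g (j + 1)) s t)) * ubar u (x t) s
          = (∑ s, ∑ t, γ s t * ubar u (x t) s) +
            ε * ∑ s, ∑ t, (∑ j, (ind (g j) (g j) s t - ind (g j) (g (j + 1)) s t))
              * ubar u (x t) s := by
            rw [Finset.mul_sum]
            rw [← Finset.sum_add_distrib]
            refine Finset.sum_congr rfl fun s _ => ?_
            rw [Finset.mul_sum, ← Finset.sum_add_distrib]
            refine Finset.sum_congr rfl fun t _ => ?_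
            ring
        _ = _ := by
            congr 1
            congr 1
            calc ∑ s, ∑ t, (∑ j, (ind (g j) (g j) s t - ind (g j) (g (j + 1)) s t))
                  * ubar u (x t) s
                = ∑ s, ∑ t, ∑ j, (ind (g j) (g j) s t - ind (g j) (g (j + 1)) s t)
                  * ubar u (x t) s := by
                  refine Finset.sum_congr rfl fun s _ => Finset.sum_congr rfl fun t _ => ?_
                  rw [Finset.sum_mul]
              _ = ∑ s, ∑ j : Fin (J + 2), ∑ t, (ind (g j) (g j) s t - ind (g j) (g (j + 1)) s t)
                  * ubar u (x t) s := Finset.sum_congr rfl fun s _ => Finset.sum_comm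
              _ = ∑ j : Fin (J + 2), ∑ s, ∑ t,
                  (ind (g j) (g j) s t - ind (g j) (g (j + 1)) s t) * ubar u (x t) s :=
                  Finset.sum_comm
              _ = ∑ j : Fin (J + 2), (ubar u (x (g j)) (g j) - ubar u (x (g (j + 1))) (g j)) :=
                  Finset.sum_congr rfl fun j _ => key j
    rw [hexp]
    have := hcm J g hg
    have h3 : 0 ≤ ∑ j : Fin (J + 2), (ubar u (x (g j)) (g j) - ubar u (x (g (j + 1))) (g j)) := by
      rw [Finset.sum_sub_distrib]
      linarith
    nlinarith
  · -- diagonal strictly increases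
    have hdiag : ∑ s, (γ s s + ε * ∑ j, (ind (g j) (g j) s s - ind (g j) (g (j + 1)) s s))
        = (∑ s, γ s s) + ε * (J + 2) := by
      rw [Finset.sum_add_distrib, ← Finset.mul_sum, Finset.sum_comm]
      congr 2
      have : ∀ j : Fin (J + 2), ∑ s, (ind (g j) (g j) s s - ind (g j) (g (j + 1)) s s)
          = 1 := by
        intro j
        rw [Finset.sum_sub_distrib, ind_sum_diag, ind_sum_diag,
          if_pos rfl, if_neg (hgne j), sub_zero]
      rw [Finset.sum_congr rfl (fun j _ => this j), Finset.sum_const, Finset.card_univ]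
      simp [mul_comm]
    rw [hdiag]
    have : 0 < ε * (J + 2) := by positivity
    linarith

end Exchange

lemma exists_good_coupling {Θ X : Type*} [Fintype Θ] [Fintype X] [Nonempty Θ] [DecidableEq Θ]
    (u : X × Θ → ℝ) (x : Θ → X → ℝ) (hcm : CyclMonoSCF u x)
    (m q : Θ → ℝ) (hm : IsProbVec m) (hq : IsProbVec q) :
    ∃ γ : Θ → Θ → ℝ,
      (∀ s t, 0 ≤ γ s t) ∧ (∀ s, ∑ t, γ s t = m s) ∧ (∀ t, ∑ s, γ s t = q t) ∧
      (∀ γ' : Θ → Θ → ℝ, (∀ s t, 0 ≤ γ' s t) → (∀ s, ∑ t, γ' s t = m s) →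
        (∀ t, ∑ s, γ' s t = q t) →
        ∑ s, ∑ t, γ' s t * ubar u (x t) s ≤ ∑ s, ∑ t, γ s t * ubar u (x t) s) ∧
      1 - ∑ s, γ s s ≤ ((Fintype.card Θ : ℝ) - 1) * tv q m := by
  classical
  set c : Θ → Θ → ℝ := fun s t => ubar u (x t) s with hc
  set val : (Θ → Θ → ℝ) → ℝ := fun γ => ∑ s, ∑ t, γ s t * c s t with hval
  set diag : (Θ → Θ → ℝ) → ℝ := fun γ => ∑ s, γ s s with hdiag
  set C : Set (Θ → Θ → ℝ) :=
    {γ | (∀ s t, 0 ≤ γ s t) ∧ (∀ s, ∑ t, γ s t = m s) ∧ (∀ t, ∑ s, γ s t = q t)} with hC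
  have hev : ∀ s t : Θ, Continuous (fun γ : Θ → Θ → ℝ => γ s t) :=
    fun s t => (continuous_apply t).comp (continuous_apply s)
  -- C is nonempty
  have hCne : C.Nonempty := by
    refine ⟨fun s t => m s * q t, fun s t => mul_nonneg (hm.1 s) (hq.1 t), fun s => ?_, fun t => ?_⟩
    · rw [← Finset.mul_sum, hq.2, mul_one]
    · rw [← Finset.sum_mul, hm.2, one_mul]
  -- C is compact
  have hCclosed : IsClosed C := by
    have h1 : IsClosed {γ : Θ → Θ → ℝ | ∀ s t, 0 ≤ γ s t} := by
      have he : {γ : Θ → Θ → ℝ | ∀ s t, 0 ≤ γ s t} = ⋂ s, ⋂ t, {γ | 0 ≤ γ s t} := by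
        ext γ; simp
      rw [he]
      exact isClosed_iInter fun s => isClosed_iInter fun t =>
        isClosed_le continuous_const (hev s t)
    have h2 : IsClosed {γ : Θ → Θ → ℝ | ∀ s, ∑ t, γ s t = m s} := by
      have he : {γ : Θ → Θ → ℝ | ∀ s, ∑ t, γ s t = m s} = ⋂ s, {γ | ∑ t, γ s t = m s} := by
        ext γ; simp
      rw [he]
      exact isClosed_iInter fun s =>
        isClosed_eq (continuous_finset_sum _ fun t _ => hev s t) continuous_const
    have h3 : IsClosed {γ : Θ → Θ → ℝ | ∀ t, ∑ s, γ s t = q t} := by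
      have he : {γ : Θ → Θ → ℝ | ∀ t, ∑ s, γ s t = q t} = ⋂ t, {γ | ∑ s, γ s t = q t} := by
        ext γ; simp
      rw [he]
      exact isClosed_iInter fun t =>
        isClosed_eq (continuous_finset_sum _ fun s _ => hev s t) continuous_const
    have hCeq : C = {γ : Θ → Θ → ℝ | ∀ s t, 0 ≤ γ s t} ∩
        ({γ | ∀ s, ∑ t, γ s t = m s} ∩ {γ | ∀ t, ∑ s, γ s t = q t}) := by
      ext γ; simp only [hC, Set.mem_setOf_eq, Set.mem_inter_iff]
    rw [hCeq]
    exact h1.inter (h2.inter h3)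
  have hCcompact : IsCompact C := by
    have hbox : IsCompact (Set.univ.pi fun _ : Θ => Set.univ.pi fun _ : Θ => Set.Icc (0:ℝ) 1) :=
      isCompact_univ_pi fun _ => isCompact_univ_pi fun _ => isCompact_Icc
    refine hbox.of_isClosed_subset hCclosed ?_
    intro γ hγ
    refine Set.mem_univ_pi.2 fun s => Set.mem_univ_pi.2 fun t => ⟨hγ.1 s t, ?_⟩
    have h1 : γ s t ≤ ∑ t', γ s t' :=
      Finset.single_le_sum (fun t' _ => hγ.1 s t') (Finset.mem_univ t)
    have h2 : m s ≤ ∑ s', m s' :=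
      Finset.single_le_sum (fun s' _ => hm.1 s') (Finset.mem_univ s)
    rw [hγ.2.1 s] at h1
    rw [hm.2] at h2
    linarith
  -- continuity
  have hvalc : Continuous val := by
    apply continuous_finset_sum
    intro s _
    apply continuous_finset_sum
    intro t _
    exact (hev s t).mul continuous_const
  have hdiagc : Continuous diag := by
    apply continuous_finset_sum
    intro s _
    exact hev s s
  -- first maximization
  obtain ⟨γ₀, hγ₀C, hγ₀max⟩ := hCcompact.exists_isMaxOn hCne hvalc.continuousOn
  set A : Set (Θ → Θ → ℝ) := C ∩ {γ | val γ₀ ≤ val γ} with hA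
  have hAcompact : IsCompact A :=
    hCcompact.inter_right (isClosed_le continuous_const hvalc)
  have hAne : A.Nonempty := ⟨γ₀, hγ₀C, show val γ₀ ≤ val γ₀ from le_refl _⟩
  obtain ⟨γ, hγA, hγdiag⟩ := hAcompact.exists_isMaxOn hAne hdiagc.continuousOn
  have hγC : γ ∈ C := hγA.1
  obtain ⟨hpos, hrow, hcol⟩ := hγC
  have hγval : val γ₀ ≤ val γ := hγA.2
  -- optimality of γ
  have hopt : ∀ γ' : Θ → Θ → ℝ, (∀ s t, 0 ≤ γ' s t) → (∀ s, ∑ t, γ' s t = m s) →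
      (∀ t, ∑ s, γ' s t = q t) → val γ' ≤ val γ := by
    intro γ' h1 h2 h3
    have : γ' ∈ C := ⟨h1, h2, h3⟩
    exact (isMaxOn_iff.1 hγ₀max _ this).trans hγval
  -- the off-diagonal support relation has no cycles
  set R : Θ → Θ → Prop := fun s t => s ≠ t ∧ 0 < γ s t with hR
  have hirr : ∀ a, ¬ R a a := fun a h => h.1 rfl
  have hsc : ∀ n, 2 ≤ n → ∀ f : ℕ → Θ, (∀ i j, i < n → j < n → f i = f j → i = j) →
      (∀ i, i < n → R (f i) (f (i+1))) → f n ≠ f 0 := by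
    intro n hn2 f hinj hstep heq
    obtain ⟨J, rfl⟩ : ∃ J, n = J + 2 := ⟨n - 2, by omega⟩
    set g : Fin (J + 2) → Θ := fun j => f j.val with hgdef
    have hg : Function.Injective g := by
      intro j1 j2 h
      exact Fin.ext (hinj _ _ j1.isLt j2.isLt h)
    have hg1 : ∀ j : Fin (J + 2), g (j + 1) = f (j.val + 1) := by
      intro j
      show f ((j + 1 : Fin (J + 2)).val) = f (j.val + 1)
      rw [Fin.val_add, Fin.val_one]
      rcases Nat.lt_or_ge (j.val + 1) (J + 2) with h | h
      · rw [Nat.mod_eq_of_lt h]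
      · have hj := j.isLt
        have he : j.val + 1 = J + 2 := by omega
        rw [he, Nat.mod_self]
        exact heq.symm
    have hcyc : ∀ j : Fin (J + 2), 0 < γ (g j) (g (j + 1)) := by
      intro j
      rw [hg1 j]
      exact (hstep j.val j.isLt).2
    obtain ⟨γ'', h''pos, h''row, h''col, h''val, h''diag⟩ :=
      exchange u x hcm γ hpos J g hg hcyc
    have h''C : γ'' ∈ C := by
      refine ⟨h''pos, fun s => ?_, fun t => ?_⟩
      · rw [h''row s, hrow s]
      · rw [h''col t, hcol t]
    have h''A : γ'' ∈ A := ⟨h''C, hγval.trans h''val⟩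
    have := isMaxOn_iff.1 hγdiag _ h''A
    simp only [hdiag] at this
    linarith
  have htg : ∀ a, ¬ Relation.TransGen R a a := by
    intro a ha
    obtain ⟨n, hn, f, hf0, hfn, hstep⟩ := transGen_walk R ha
    exact no_closed_walk R hirr hsc n hn f hstep (by rw [hfn, hf0])
  obtain ⟨ρ, hρlt, hρbd⟩ := exists_rank R htg
  -- the final bound
  refine ⟨γ, hpos, hrow, hcol, hopt, ?_⟩
  have hNpos : 0 < Fintype.card Θ := Fintype.card_pos
  have h1 : 1 - ∑ s, γ s s = ∑ s, ∑ t ∈ univ.erase s, γ s t := by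
    have hh : ∀ s : Θ, ∑ t ∈ univ.erase s, γ s t = m s - γ s s := by
      intro s
      have := Finset.sum_erase_add univ (γ s) (Finset.mem_univ s)
      rw [hrow s] at this
      linarith
    rw [Finset.sum_congr rfl fun s _ => hh s, Finset.sum_sub_distrib, hm.2]
  have h2 : ∑ s, ∑ t ∈ univ.erase s, γ s t ≤
      ∑ s, ∑ t ∈ univ.erase s, γ s t * ((ρ t : ℝ) - (ρ s : ℝ)) := by
    refine Finset.sum_le_sum fun s _ => Finset.sum_le_sum fun t ht => ?_
    rcases eq_or_lt_of_le (hpos s t) with h | h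
    · rw [← h]; simp
    · have hst : s ≠ t := (Finset.ne_of_mem_erase ht).symm
      have := hρlt s t ⟨hst, h⟩
      have hcast : (ρ s : ℝ) + 1 ≤ (ρ t : ℝ) := by exact_mod_cast this
      nlinarith
  have h3 : ∑ s, ∑ t ∈ univ.erase s, γ s t * ((ρ t : ℝ) - (ρ s : ℝ)) =
      ∑ s, ∑ t, γ s t * ((ρ t : ℝ) - (ρ s : ℝ)) := by
    refine Finset.sum_congr rfl fun s _ => ?_
    have := Finset.sum_erase_add univ (fun t => γ s t * ((ρ t : ℝ) - (ρ s : ℝ)))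
      (Finset.mem_univ s)
    simp only [sub_self, mul_zero, add_zero] at this
    exact this
  have h4 : ∑ s, ∑ t, γ s t * ((ρ t : ℝ) - (ρ s : ℝ)) = ∑ s, (q s - m s) * (ρ s : ℝ) := by
    have e1 : ∑ s, ∑ t, γ s t * ((ρ t : ℝ) - (ρ s : ℝ)) =
        (∑ s, ∑ t, γ s t * (ρ t : ℝ)) - ∑ s, ∑ t, γ s t * (ρ s : ℝ) := by
      rw [← Finset.sum_sub_distrib]
      refine Finset.sum_congr rfl fun s _ => ?_
      rw [← Finset.sum_sub_distrib]
      refine Finset.sum_congr rfl fun t _ => by ring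
    have e2 : ∑ s, ∑ t, γ s t * (ρ t : ℝ) = ∑ t, q t * (ρ t : ℝ) := by
      rw [Finset.sum_comm]
      refine Finset.sum_congr rfl fun t _ => ?_
      rw [← Finset.sum_mul, hcol t]
    have e3 : ∑ s, ∑ t, γ s t * (ρ s : ℝ) = ∑ s, m s * (ρ s : ℝ) := by
      refine Finset.sum_congr rfl fun s _ => ?_
      rw [← Finset.sum_mul, hrow s]
    rw [e1, e2, e3, ← Finset.sum_sub_distrib]
    refine Finset.sum_congr rfl fun s _ => by ring
  have h5 : ∑ s, (q s - m s) * (ρ s : ℝ) ≤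
      ∑ s, max (q s - m s) 0 * ((Fintype.card Θ : ℝ) - 1) := by
    refine Finset.sum_le_sum fun s _ => ?_
    have hbd : (ρ s : ℝ) ≤ (Fintype.card Θ : ℝ) - 1 := by
      have := hρbd s
      have : ((ρ s + 1 : ℕ) : ℝ) ≤ ((Fintype.card Θ : ℕ) : ℝ) := by exact_mod_cast this
      push_cast at this
      linarith
    have hρnn : (0:ℝ) ≤ (ρ s : ℝ) := Nat.cast_nonneg _
    rcases le_or_gt 0 (q s - m s) with h | h
    · rw [max_eq_left h]
      exact mul_le_mul_of_nonneg_left hbd h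
    · rw [max_eq_right h.le]
      have : (q s - m s) * (ρ s : ℝ) ≤ 0 := mul_nonpos_of_nonpos_of_nonneg h.le hρnn
      simpa using this
  have h6 : ∑ s, max (q s - m s) 0 = tv q m := by
    have hzero : ∑ s, (q s - m s) = 0 := by
      rw [Finset.sum_sub_distrib, hq.2, hm.2, sub_self]
    have hterm : ∀ s : Θ, max (q s - m s) 0 = ((q s - m s) + |q s - m s|) / 2 := by
      intro s
      rcases le_or_gt 0 (q s - m s) with h | h
      · rw [max_eq_left h, abs_of_nonneg h]; ring
      · rw [max_eq_right h.le, abs_of_neg h]; ring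
    rw [Finset.sum_congr rfl fun s _ => hterm s, ← Finset.sum_div, Finset.sum_add_distrib,
      hzero, zero_add, tv]
  calc 1 - ∑ s, γ s s = ∑ s, ∑ t ∈ univ.erase s, γ s t := h1
    _ ≤ ∑ s, ∑ t ∈ univ.erase s, γ s t * ((ρ t : ℝ) - (ρ s : ℝ)) := h2
    _ = ∑ s, ∑ t, γ s t * ((ρ t : ℝ) - (ρ s : ℝ)) := h3
    _ = ∑ s, (q s - m s) * (ρ s : ℝ) := h4
    _ ≤ ∑ s, max (q s - m s) 0 * ((Fintype.card Θ : ℝ) - 1) := h5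
    _ = ((Fintype.card Θ : ℝ) - 1) * ∑ s, max (q s - m s) 0 := by
        rw [← Finset.sum_mul, mul_comm]
    _ = ((Fintype.card Θ : ℝ) - 1) * tv q m := by rw [h6]

/-- Ex-post error bound for the quota mechanism. If `x` is
cyclically monotone, then for every quota `q` and type vector `θv` there is a
payoff-maximizing feasible report vector whose average decision error is at
most `(|Θ| − 1)·‖q − marg θv‖`. -/
theorem quota_expost_bound {Θ X : Type*} [Fintype Θ] [Fintype X]
    [Nonempty Θ] [Nonempty X] [DecidableEq Θ]
    (u : X × Θ → ℝ) (x : Θ → X → ℝ) (hx : ∀ θ, IsProbVec (x θ))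
    (hcm : CyclMonoSCF u x)
    (q : Θ → ℝ) (hq : IsProbVec q) (K : ℕ) (hK : 1 ≤ K) (θv : Fin K → Θ) :
    ∃ r : Fin K → Θ → ℝ, Feasible K q r ∧
      (∀ r' : Fin K → Θ → ℝ, Feasible K q r' →
        payoff u x K θv r' ≤ payoff u x K θv r) ∧
      (∑ k, tv (liftSCF x (r k)) (x (θv k))) / K ≤
        ((Fintype.card Θ : ℝ) - 1) * tv q (marg K θv) := by
  classical
  have hKpos : (0:ℝ) < K := by exact_mod_cast hK
  have hKne : (K:ℝ) ≠ 0 := ne_of_gt hKpos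
  set cnt : Θ → ℝ := fun s => ((Finset.univ.filter (fun k => θv k = s)).card : ℝ) with hcnt_def
  set m : Θ → ℝ := marg K θv with hm_def
  have hm_eq : ∀ s, m s = cnt s / K := fun s => rfl
  have hcardsum : ∑ s, cnt s = (K:ℝ) := by
    rw [hcnt_def]
    norm_cast
    rw [← Nat.cast_sum]
    rw [Finset.sum_card_fiberwise_eq_card_filter]
    simp
  have hm : IsProbVec m := by
    constructor
    · intro s
      exact div_nonneg (Nat.cast_nonneg _) hKpos.le
    · calc ∑ s, m s = ∑ s, cnt s / K := Finset.sum_congr rfl fun s _ => hm_eq s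
        _ = (∑ s, cnt s) / K := by rw [← Finset.sum_div]
        _ = 1 := by rw [hcardsum, div_self hKne]
  obtain ⟨γ, hpos, hrow, hcol, hopt, hbound⟩ := exists_good_coupling u x hcm m q hm hq
  have hγ0 : ∀ s, m s = 0 → ∀ t, γ s t = 0 := by
    intro s hs t
    have hsum : ∑ t', γ s t' = 0 := by rw [hrow s, hs]
    exact (Finset.sum_eq_zero_iff_of_nonneg (fun t' _ => hpos s t')).1 hsum t (Finset.mem_univ t)
  have hconv : ∀ s t0, cnt s * (γ s t0 / m s) = K * γ s t0 := by
    intro s t0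
    by_cases hs : m s = 0
    · have hcnt0 : cnt s = 0 := by
        have := hm_eq s
        rw [hs] at this
        field_simp at this
        simpa using this.symm
      rw [hcnt0, hγ0 s hs t0, zero_mul, mul_zero]
    · have hcnt : cnt s = m s * K := by
        have := hm_eq s
        field_simp at this
        linarith [this]
      rw [hcnt]
      field_simp
  set r : Fin K → Θ → ℝ := fun k t => γ (θv k) t / m (θv k) with hr_def
  have hcntpos : ∀ k, 0 < cnt (θv k) := by
    intro k
    have hk : k ∈ Finset.univ.filter (fun k' => θv k' = θv k) := by simp
    have := Finset.card_pos.2 ⟨k, hk⟩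
    show (0:ℝ) < ((Finset.univ.filter (fun k' => θv k' = θv k)).card : ℝ)
    exact_mod_cast this
  have hmpos : ∀ k, 0 < m (θv k) := by
    intro k
    rw [hm_eq]
    exact div_pos (hcntpos k) hKpos
  have hprob : ∀ k, IsProbVec (r k) := by
    intro k
    constructor
    · intro t
      exact div_nonneg (hpos _ t) (hmpos k).le
    · rw [hr_def]
      show ∑ t, γ (θv k) t / m (θv k) = 1
      rw [← Finset.sum_div, hrow, div_self (hmpos k).ne']
  -- generic: sums over k of functions of (θv k)
  have hfiber : ∀ f : Θ → ℝ, ∑ k, f (θv k) = ∑ s, cnt s * f s := by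
    intro f
    rw [← Finset.sum_fiberwise' (Finset.univ : Finset (Fin K)) θv f]
    refine Finset.sum_congr rfl fun s _ => ?_
    rw [Finset.sum_const, nsmul_eq_mul]
  have hfeas : Feasible K q r := by
    constructor
    · exact hprob
    · intro t
      have e1 : ∑ k, r k t = ∑ s, cnt s * (γ s t / m s) := hfiber (fun s => γ s t / m s)
      rw [e1, Finset.sum_congr rfl fun s _ => hconv s t, ← Finset.mul_sum, hcol t,
        mul_div_cancel_left₀ _ hKne]
  -- payoff of any report vector as value of induced coupling
  have hpayoff : ∀ r' : Fin K → Θ → ℝ, (∀ k, IsProbVec (r' k)) →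
      payoff u x K θv r' =
        ∑ s, ∑ t, ((∑ k ∈ Finset.univ.filter (fun k' => θv k' = s), r' k t) / K)
          * ubar u (x t) s := by
    intro r' _
    rw [payoff]
    have e1 : ∑ k, ubar u (liftSCF x (r' k)) (θv k)
        = ∑ k, ∑ t, r' k t * ubar u (x t) (θv k) :=
      Finset.sum_congr rfl fun k _ => ubar_lift u x (r' k) (θv k)
    rw [e1, ← Finset.sum_fiberwise (Finset.univ : Finset (Fin K)) θv
      (fun k => ∑ t, r' k t * ubar u (x t) (θv k)), Finset.sum_div]
    refine Finset.sum_congr rfl fun s _ => ?_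
    have e2 : ∀ k ∈ Finset.univ.filter (fun k' => θv k' = s),
        ∑ t, r' k t * ubar u (x t) (θv k) = ∑ t, r' k t * ubar u (x t) s := by
      intro k hk
      rw [(Finset.mem_filter.1 hk).2]
    rw [Finset.sum_congr rfl e2, Finset.sum_comm, Finset.sum_div]
    refine Finset.sum_congr rfl fun t _ => ?_
    rw [← Finset.sum_mul]
    ring
  -- the induced coupling of r is γ itself
  have hγr : ∀ s t, (∑ k ∈ Finset.univ.filter (fun k' => θv k' = s), r k t) / K = γ s t := by
    intro s t
    have e : ∀ k ∈ Finset.univ.filter (fun k' => θv k' = s), r k t = γ s t / m s := by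
      intro k hk
      show γ (θv k) t / m (θv k) = γ s t / m s
      rw [(Finset.mem_filter.1 hk).2]
    rw [Finset.sum_congr rfl e, Finset.sum_const, nsmul_eq_mul]
    show cnt s * (γ s t / m s) / K = γ s t
    rw [hconv s t, mul_div_cancel_left₀ _ hKne]
  have hpay_r : payoff u x K θv r = ∑ s, ∑ t, γ s t * ubar u (x t) s := by
    rw [hpayoff r hprob]
    exact Finset.sum_congr rfl fun s _ => Finset.sum_congr rfl fun t _ => by rw [hγr s t]
  refine ⟨r, hfeas, ?_, ?_⟩
  · -- payoff maximality
    intro r' hr'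
    rw [hpay_r, hpayoff r' hr'.1]
    have h1 : ∀ s t, 0 ≤ (∑ k ∈ Finset.univ.filter (fun k' => θv k' = s), r' k t) / K := by
      intro s t
      apply div_nonneg _ hKpos.le
      exact Finset.sum_nonneg fun k _ => (hr'.1 k).1 t
    have h2 : ∀ s, ∑ t, (∑ k ∈ Finset.univ.filter (fun k' => θv k' = s), r' k t) / K = m s := by
      intro s
      rw [← Finset.sum_div, Finset.sum_comm]
      have : ∑ k ∈ Finset.univ.filter (fun k' => θv k' = s), ∑ t, r' k t
          = ∑ k ∈ Finset.univ.filter (fun k' => θv k' = s), 1 :=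
        Finset.sum_congr rfl fun k _ => (hr'.1 k).2
      rw [this, Finset.sum_const, nsmul_eq_mul, mul_one, hm_eq]
    have h3 : ∀ t, ∑ s, (∑ k ∈ Finset.univ.filter (fun k' => θv k' = s), r' k t) / K = q t := by
      intro t
      rw [← Finset.sum_div, Finset.sum_fiberwise (Finset.univ : Finset (Fin K)) θv
        (fun k => r' k t)]
      exact hr'.2 t
    exact hopt (fun s t => (∑ k ∈ Finset.univ.filter (fun k' => θv k' = s), r' k t) / K)
      h1 h2 h3
  · -- tv bound
    have htv : ∀ k, tv (liftSCF x (r k)) (x (θv k)) ≤ 1 - r k (θv k) :=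
      fun k => tv_lift_le x hx (hprob k) (θv k)
    have hdiag : ∑ k, r k (θv k) = K * ∑ s, γ s s := by
      have e1 : ∑ k, r k (θv k) = ∑ s, cnt s * (γ s s / m s) := hfiber (fun s => γ s s / m s)
      rw [e1, Finset.sum_congr rfl fun s _ => hconv s s, ← Finset.mul_sum]
    calc (∑ k, tv (liftSCF x (r k)) (x (θv k))) / K
        ≤ (∑ k, (1 - r k (θv k))) / K := by
          have hnum := Finset.sum_le_sum (fun k (_ : k ∈ Finset.univ) => htv k)
          gcongr
      _ = 1 - ∑ s, γ s s := by
          rw [Finset.sum_sub_distrib, Finset.sum_const, Finset.card_univ, Fintype.card_fin,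
            nsmul_eq_mul, mul_one, hdiag, sub_div, div_self hKne,
            mul_div_cancel_left₀ _ hKne]
      _ ≤ ((Fintype.card Θ : ℝ) - 1) * tv q m := hbound
end

section
/- Let Θ and X be finite nonempty sets, u : X × Θ → ℝ, and let x : Θ → Δ(X) be a strictly cyclically monotone social choice function. Fix a quota q ∈ Δ(Θ), an integer K ≥ 1, and a type vector θ = (θ^1,…,θ^K) ∈ Θ^K. Then EVERY feasible report vector r = (r^1,…,r^K) at quota q that maximizes the payoff (1/K)·Σ_k ū(x(r^k),θ^k) among all feasible report vectors at quota q satisfies (1/K)·Σ_{k=1}^K ‖x(r^k) − x(θ^k)‖ ≤ (|Θ| − 1)·‖q − marg θ‖. -/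
open Finset

/-- `x : Θ → Δ(X)` is strictly cyclically monotone for the utility `u`: for
every cycle of types whose lotteries are pairwise distinct, the cyclic
inequality is strict. -/
def StrictCyclMonoSCF {Θ X : Type*} [Fintype X]
    (u : X × Θ → ℝ) (x : Θ → X → ℝ) : Prop :=
  ∀ J : ℕ, ∀ θs : Fin (J + 2) → Θ,
    (∀ j j' : Fin (J + 2), j ≠ j' → x (θs j) ≠ x (θs j')) →
    ∑ j, ubar u (x (θs (j + 1))) (θs j) < ∑ j, ubar u (x (θs j)) (θs j)

lemma mod_succ_cases (d m : ℕ) (hd : 1 ≤ d) :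
    (m % d + 1 < d ∧ (m+1) % d = m % d + 1) ∨ (m % d + 1 = d ∧ (m+1) % d = 0) := by
  have ht : m % d < d := Nat.mod_lt _ (by omega)
  have hadd : (m + 1) % d = (m % d + 1) % d := by
    conv_lhs => rw [Nat.add_mod]
    rcases Nat.eq_or_lt_of_le hd with h1 | h1
    · simp [← h1]
    · rw [Nat.mod_eq_of_lt h1]
  rcases lt_or_ge (m % d + 1) d with h | h
  · left; exact ⟨h, by rw [hadd, Nat.mod_eq_of_lt h]⟩
  · right
    have he : m % d + 1 = d := by omega
    exact ⟨he, by rw [hadd, he, Nat.mod_self]⟩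

lemma gmod_of_per {α : Type*} (g : ℕ → α) (n : ℕ) (hn : 1 ≤ n) (hper : ∀ i, g (i + n) = g i) :
    ∀ i, g (i % n) = g i := by
  intro i
  induction i using Nat.strong_induction_on with
  | _ i ih =>
    rcases lt_or_ge i n with hlt | hge
    · rw [Nat.mod_eq_of_lt hlt]
    · have e : i = (i - n) + n := by omega
      rw [e, hper (i - n), Nat.add_mod_right]
      exact ih _ (by omega)

/-- Counting lemma for acyclic nonnegative flows. -/
lemma flow_count {L : Type*} [DecidableEq L] (F : L → L → ℝ)
    (hF : ∀ a b, 0 ≤ F a b)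
    (hacyc : ∀ a, ¬ Relation.TransGen (fun p q => 0 < F p q) a a) :
    ∀ S : Finset L,
      ∑ a ∈ S, ∑ b ∈ S, F a b ≤
        ((S.card : ℝ) - 1) * ∑ a ∈ S, max (∑ b ∈ S, F a b - ∑ b ∈ S, F b a) 0 := by
  have hdiag : ∀ a, F a a = 0 := by
    intro a
    by_contra h
    exact hacyc a (Relation.TransGen.single (lt_of_le_of_ne (hF a a) (Ne.symm h)))
  intro S
  induction S using Finset.strongInduction with
  | _ S ih =>
    rcases S.eq_empty_or_nonempty with rfl | hne
    · simp
    -- find a sink m : no outgoing flow within S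
    haveI : Nonempty {a // a ∈ S} := ⟨⟨hne.choose, hne.choose_spec⟩⟩
    set E : L → L → Prop := fun p q => 0 < F p q with hE
    set E' : {a // a ∈ S} → {a // a ∈ S} → Prop :=
      fun p q => Relation.TransGen E q.1 p.1 with hE'
    haveI : IsTrans {a // a ∈ S} E' := ⟨fun a b c hab hbc => hbc.trans hab⟩
    haveI : IsIrrefl {a // a ∈ S} E' := ⟨fun a h => hacyc a.1 h⟩
    obtain ⟨m, -, hm⟩ := (Finite.wellFounded_of_trans_of_irrefl E').has_min
      Set.univ ⟨Classical.arbitrary _, trivial⟩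
    have hsink : ∀ b ∈ S, F m.1 b = 0 := by
      intro b hb
      by_contra h
      exact hm ⟨b, hb⟩ trivial (Relation.TransGen.single (lt_of_le_of_ne (hF _ _) (Ne.symm h)))
    by_cases hcard1 : S.card = 1
    · obtain ⟨a, rfl⟩ := Finset.card_eq_one.mp hcard1
      simp [hdiag]
    -- main case: |S| ≥ 2
    have hm2 : 2 ≤ S.card := by
      have := Finset.card_pos.mpr hne; omega
    set S' : Finset L := S.erase m.1 with hS'
    have hmS : m.1 ∈ S := m.2
    have hsum : ∀ f : L → ℝ, ∑ a ∈ S, f a = ∑ a ∈ S', f a + f m.1 :=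
      fun f => (Finset.sum_erase_add S f hmS).symm
    have hcard' : (S'.card : ℝ) = (S.card : ℝ) - 1 := by
      rw [hS', Finset.card_erase_of_mem hmS]
      have h1 := Finset.card_pos.mpr hne
      have : ((S.card - 1 : ℕ) : ℝ) = (S.card : ℝ) - 1 := by
        push_cast [Nat.cast_sub h1]; ring
      exact this
    set D : ℝ := ∑ a ∈ S, max (∑ b ∈ S, F a b - ∑ b ∈ S, F b a) 0 with hD
    have hD0 : 0 ≤ D := Finset.sum_nonneg fun a _ => le_max_right _ _
    have hsinkout : ∑ b ∈ S, F m.1 b = 0 := Finset.sum_eq_zero fun b hb => hsink b hb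
    -- divergence sum over S is zero
    have hzero : ∑ a ∈ S, (∑ b ∈ S, F a b - ∑ b ∈ S, F b a) = 0 := by
      rw [Finset.sum_sub_distrib, Finset.sum_comm]
      ring
    have hDsub : ∑ a ∈ S', max (∑ b ∈ S, F a b - ∑ b ∈ S, F b a) 0 ≤ D := by
      rw [hD, hsum (fun a => max (∑ b ∈ S, F a b - ∑ b ∈ S, F b a) 0)]
      have : (0:ℝ) ≤ max (∑ b ∈ S, F m.1 b - ∑ b ∈ S, F b m.1) 0 := le_max_right _ _
      linarith
    -- split the total
    have hsplit : ∑ a ∈ S, ∑ b ∈ S, F a b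
        = (∑ a ∈ S', ∑ b ∈ S', F a b) + ∑ a ∈ S', F a m.1 := by
      rw [hsum (fun a => ∑ b ∈ S, F a b), hsinkout, add_zero]
      have h2 : ∀ a ∈ S', ∑ b ∈ S, F a b = ∑ b ∈ S', F a b + F a m.1 :=
        fun a _ => hsum (fun b => F a b)
      rw [Finset.sum_congr rfl h2, Finset.sum_add_distrib]
    -- incoming flow at m is bounded by D
    have hin : ∑ a ∈ S', F a m.1 ≤ D := by
      have h4 := hsum (fun a => ∑ b ∈ S, F a b - ∑ b ∈ S, F b a)
      rw [hzero] at h4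
      have h6 : ∑ b ∈ S, F b m.1 = ∑ a ∈ S', F a m.1 := by
        rw [hsum (fun b => F b m.1), hdiag, add_zero]
      rw [hsinkout, h6] at h4
      have h3 : ∑ a ∈ S', F a m.1 = ∑ a ∈ S', (∑ b ∈ S, F a b - ∑ b ∈ S, F b a) := by
        linarith
      rw [h3]
      calc ∑ a ∈ S', (∑ b ∈ S, F a b - ∑ b ∈ S, F b a)
          ≤ ∑ a ∈ S', max (∑ b ∈ S, F a b - ∑ b ∈ S, F b a) 0 :=
            Finset.sum_le_sum fun a _ => le_max_left _ _
        _ ≤ D := hDsub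
    -- divergences on S' are dominated
    have hDle : ∑ a ∈ S', max (∑ b ∈ S', F a b - ∑ b ∈ S', F b a) 0 ≤ D := by
      have step : ∀ a ∈ S', max (∑ b ∈ S', F a b - ∑ b ∈ S', F b a) 0
          ≤ max (∑ b ∈ S, F a b - ∑ b ∈ S, F b a) 0 := by
        intro a ha
        apply max_le_max _ le_rfl
        have e1 : ∑ b ∈ S, F a b = ∑ b ∈ S', F a b + F a m.1 := hsum _
        have e2 : ∑ b ∈ S, F b a = ∑ b ∈ S', F b a + F m.1 a := hsum _
        have e3 : F m.1 a = 0 := hsink a (Finset.mem_of_mem_erase ha)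
        have e4 : 0 ≤ F a m.1 := hF _ _
        rw [e1, e2, e3]; linarith
      calc ∑ a ∈ S', max (∑ b ∈ S', F a b - ∑ b ∈ S', F b a) 0
          ≤ ∑ a ∈ S', max (∑ b ∈ S, F a b - ∑ b ∈ S, F b a) 0 := Finset.sum_le_sum step
        _ ≤ D := hDsub
    have hIH := ih S' (Finset.erase_ssubset hmS)
    have hcard'' : (1:ℝ) ≤ (S'.card : ℝ) := by
      rw [hcard']
      have : (2:ℝ) ≤ (S.card : ℝ) := by exact_mod_cast hm2
      linarith
    calc ∑ a ∈ S, ∑ b ∈ S, F a b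
        = (∑ a ∈ S', ∑ b ∈ S', F a b) + ∑ a ∈ S', F a m.1 := hsplit
      _ ≤ ((S'.card : ℝ) - 1) * (∑ a ∈ S', max (∑ b ∈ S', F a b - ∑ b ∈ S', F b a) 0)
            + D := add_le_add hIH hin
      _ ≤ ((S'.card : ℝ) - 1) * D + D := by
          apply add_le_add_left
          exact mul_le_mul_of_nonneg_left hDle (by linarith)
      _ = ((S.card : ℝ) - 1) * D := by rw [hcard']; ring


lemma ubar_liftSCF {Θ X : Type*} [Fintype Θ] [Fintype X]
    (u : X × Θ → ℝ) (x : Θ → X → ℝ) (p : Θ → ℝ) (θ : Θ) :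
    ubar u (liftSCF x p) θ = ∑ θ', p θ' * ubar u (x θ') θ := by
  simp only [ubar, liftSCF, Finset.sum_mul, Finset.mul_sum]
  rw [Finset.sum_comm]
  apply Finset.sum_congr rfl; intro θ' _
  apply Finset.sum_congr rfl; intro a _
  ring

lemma tv_lift {Θ X : Type*} [Fintype Θ] [Fintype X]
    (x : Θ → X → ℝ) (p : Θ → ℝ) (μ : X → ℝ) (hp : IsProbVec p) :
    tv (liftSCF x p) μ ≤ ∑ θ', p θ' * tv (x θ') μ := by
  have key : ∀ a, |liftSCF x p a - μ a| ≤ ∑ θ', p θ' * |x θ' a - μ a| := by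
    intro a
    have e : liftSCF x p a - μ a = ∑ θ', p θ' * (x θ' a - μ a) := by
      simp only [liftSCF, mul_sub, Finset.sum_sub_distrib, ← Finset.sum_mul, hp.2, one_mul]
    rw [e]
    calc |∑ θ', p θ' * (x θ' a - μ a)| ≤ ∑ θ', |p θ' * (x θ' a - μ a)| :=
          Finset.abs_sum_le_sum_abs _ _
      _ = ∑ θ', p θ' * |x θ' a - μ a| := by
          apply Finset.sum_congr rfl; intro θ' _
          rw [abs_mul, abs_of_nonneg (hp.1 _)]
  have h2 : ∑ a, |liftSCF x p a - μ a| ≤ ∑ θ', p θ' * ∑ a, |x θ' a - μ a| := by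
    calc ∑ a, |liftSCF x p a - μ a| ≤ ∑ a, ∑ θ', p θ' * |x θ' a - μ a| :=
          Finset.sum_le_sum fun a _ => key a
      _ = ∑ θ', ∑ a, p θ' * |x θ' a - μ a| := Finset.sum_comm
      _ = ∑ θ', p θ' * ∑ a, |x θ' a - μ a| := by
          apply Finset.sum_congr rfl; intro θ' _
          rw [Finset.mul_sum]
  calc tv (liftSCF x p) μ = (∑ a, |liftSCF x p a - μ a|) / 2 := rfl
    _ ≤ (∑ θ', p θ' * ∑ a, |x θ' a - μ a|) / 2 := by linarith
    _ = ∑ θ', p θ' * tv (x θ') μ := by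
        rw [Finset.sum_div]
        apply Finset.sum_congr rfl; intro θ' _
        rw [tv, mul_div_assoc]

/-- Ex-post error bound for every best response. If `x` is
strictly cyclically monotone, then EVERY payoff-maximizing feasible report
vector at quota `q` has average decision error at most
`(|Θ| − 1)·‖q − marg θv‖`. -/
theorem quota_expost_bound_every_best_response {Θ X : Type*} [Fintype Θ] [Fintype X]
    [Nonempty Θ] [Nonempty X] [DecidableEq Θ]
    (u : X × Θ → ℝ) (x : Θ → X → ℝ) (hx : ∀ θ, IsProbVec (x θ))
    (hcm : StrictCyclMonoSCF u x)
    (q : Θ → ℝ) (hq : IsProbVec q) (K : ℕ) (hK : 1 ≤ K) (θv : Fin K → Θ)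
    (r : Fin K → Θ → ℝ) (hr : Feasible K q r)
    (hropt : ∀ r' : Fin K → Θ → ℝ, Feasible K q r' →
      payoff u x K θv r' ≤ payoff u x K θv r) :
    (∑ k, tv (liftSCF x (r k)) (x (θv k))) / K ≤
      ((Fintype.card Θ : ℝ) - 1) * tv q (marg K θv) := by
  classical
  have hK0 : (0:ℝ) < K := by exact_mod_cast hK
  set L : Finset (X → ℝ) := Finset.univ.image x with hL
  set Fl : (X → ℝ) → (X → ℝ) → ℝ := fun ℓa ℓb =>
    if ℓa = ℓb then 0 else
      (∑ k, ∑ θ', if x (θv k) = ℓb ∧ x θ' = ℓa then r k θ' else 0) / K with hFl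
  have hFlnn : ∀ a b, 0 ≤ Fl a b := by
    intro a b
    rw [hFl]
    dsimp only
    split
    · exact le_refl 0
    · apply div_nonneg _ (le_of_lt hK0)
      apply Finset.sum_nonneg; intro k _
      apply Finset.sum_nonneg; intro θ' _
      split
      · exact (hr.1 k).1 θ'
      · exact le_refl 0
  have hFlpos : ∀ a b, 0 < Fl a b →
      a ≠ b ∧ ∃ k θ', 0 < r k θ' ∧ x θ' = a ∧ x (θv k) = b := by
    intro a b hpos
    rw [hFl] at hpos
    dsimp only at hpos
    by_cases hab : a = b
    · rw [if_pos hab] at hpos; exact absurd hpos (lt_irrefl 0)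
    refine ⟨hab, ?_⟩
    rw [if_neg hab] at hpos
    have hsumpos : 0 < ∑ k, ∑ θ', if x (θv k) = b ∧ x θ' = a then r k θ' else 0 := by
      by_contra hc
      push_neg at hc
      have : (∑ k, ∑ θ', if x (θv k) = b ∧ x θ' = a then r k θ' else 0) / (K:ℝ) ≤ 0 :=
        div_nonpos_of_nonpos_of_nonneg hc (le_of_lt hK0)
      linarith
    obtain ⟨k, -, hk⟩ := Finset.exists_lt_of_sum_lt (f := fun _ : Fin K => (0:ℝ))
      (by simpa using hsumpos)
    obtain ⟨θ', -, hθ'⟩ := Finset.exists_lt_of_sum_lt (f := fun _ : Θ => (0:ℝ))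
      (by simpa using hk)
    by_cases hcond : x (θv k) = b ∧ x θ' = a
    · rw [if_pos hcond] at hθ'
      exact ⟨k, θ', hθ', hcond.2, hcond.1⟩
    · rw [if_neg hcond] at hθ'
      exact absurd hθ' (lt_irrefl 0)
  -- the exchange argument: no injective periodic cycle
  have key : ∀ n, 2 ≤ n → ∀ g : ℕ → (X → ℝ), (∀ i, g (i + n) = g i) →
      (∀ i j, i < n → j < n → g i = g j → i = j) →
      (∀ i, ∃ k θ', 0 < r k θ' ∧ x θ' = g i ∧ x (θv k) = g (i + 1)) → False := by
    intro n hn g hper hinj hwit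
    obtain ⟨J, hJ⟩ : ∃ J, n = J + 2 := ⟨n - 2, by omega⟩
    subst hJ
    have gmod := gmod_of_per g (J + 2) (by omega) hper
    choose k0 w0 hrw0 hxw0 hxk0 using hwit
    set kk : ℕ → Fin K := fun i => k0 (i % (J + 2)) with hkk
    set ww : ℕ → Θ := fun i => w0 (i % (J + 2)) with hww
    have hrw : ∀ i, 0 < r (kk i) (ww i) := fun i => hrw0 (i % (J + 2))
    have hxw : ∀ i, x (ww i) = g i := fun i => (hxw0 (i % (J + 2))).trans (gmod i)
    have hmod1 : ∀ i, g (i % (J + 2) + 1) = g (i + 1) := by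
      intro i
      have e : (i % (J + 2) + 1) % (J + 2) = (i + 1) % (J + 2) := by
        conv_rhs => rw [Nat.add_mod]
        rw [Nat.mod_eq_of_lt (show 1 < J + 2 by omega)]
      calc g (i % (J + 2) + 1) = g ((i % (J + 2) + 1) % (J + 2)) := (gmod _).symm
        _ = g ((i + 1) % (J + 2)) := by rw [e]
        _ = g (i + 1) := gmod _
    have hxk : ∀ i, x (θv (kk i)) = g (i + 1) := fun i => (hxk0 (i % (J + 2))).trans (hmod1 i)
    have hwn : ww (J + 2) = ww 0 := by
      simp only [hww, Nat.mod_self, Nat.zero_mod]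
    have hwinj : ∀ i j, i < J + 2 → j < J + 2 → ww i = ww j → i = j := by
      intro i j hi hj hwij
      apply hinj i j hi hj
      rw [← hxw i, ← hxw j, hwij]
    have hrange : (Finset.range (J + 2)).Nonempty := ⟨0, Finset.mem_range.mpr (by omega)⟩
    set ε : ℝ := (Finset.range (J + 2)).inf' hrange (fun j => r (kk j) (ww j)) with hε
    have hε0 : 0 < ε := (Finset.lt_inf'_iff hrange).mpr fun j _ => hrw j
    have hεle : ∀ j ∈ Finset.range (J + 2), ε ≤ r (kk j) (ww j) :=
      fun j hj => Finset.inf'_le _ hj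
    set sP : Fin K → Θ → ℝ := fun k1 θ0 =>
      ∑ j ∈ Finset.range (J + 2), if kk j = k1 ∧ ww (j + 1) = θ0 then (1:ℝ) else 0 with hsP
    set sM : Fin K → Θ → ℝ := fun k1 θ0 =>
      ∑ j ∈ Finset.range (J + 2), if kk j = k1 ∧ ww j = θ0 then (1:ℝ) else 0 with hsM
    set r' : Fin K → Θ → ℝ := fun k1 θ0 => r k1 θ0 + ε * (sP k1 θ0 - sM k1 θ0) with hr'2
    have hsP0 : ∀ k1 θ0, 0 ≤ sP k1 θ0 := by
      intro k1 θ0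
      apply Finset.sum_nonneg; intro j _
      split <;> norm_num
    have hr'nn : ∀ k1 θ0, 0 ≤ r' k1 θ0 := by
      intro k1 θ0
      rw [hr'2]; dsimp only
      by_cases hB : ∃ j ∈ Finset.range (J + 2), kk j = k1 ∧ ww j = θ0
      · obtain ⟨j0, hj0, hj0k, hj0w⟩ := hB
        have hBval : sM k1 θ0 = 1 := by
          rw [hsM]; dsimp only
          rw [Finset.sum_eq_single_of_mem j0 hj0]
          · rw [if_pos ⟨hj0k, hj0w⟩]
          · intro j hj hne
            rw [if_neg]
            rintro ⟨h1, h2⟩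
            exact hne (hwinj j j0 (Finset.mem_range.mp hj) (Finset.mem_range.mp hj0)
              (h2.trans hj0w.symm))
        have hεr : ε ≤ r k1 θ0 := by
          rw [← hj0k, ← hj0w]; exact hεle j0 hj0
        have h2 := hsP0 k1 θ0
        rw [hBval]
        nlinarith
      · push_neg at hB
        have hBval : sM k1 θ0 = 0 := by
          rw [hsM]; dsimp only
          exact Finset.sum_eq_zero fun j hj =>
            if_neg (fun hc => (hB j hj) hc.1 hc.2)
        have h1 := (hr.1 k1).1 θ0
        have h2 := hsP0 k1 θ0
        rw [hBval]
        nlinarith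
    have hrowP : ∀ k1, ∑ θ0, sP k1 θ0
        = ∑ j ∈ Finset.range (J + 2), if kk j = k1 then (1:ℝ) else 0 := by
      intro k1
      rw [hsP]; dsimp only
      rw [Finset.sum_comm]
      apply Finset.sum_congr rfl; intro j _
      by_cases h : kk j = k1 <;> simp [h]
    have hrowM : ∀ k1, ∑ θ0, sM k1 θ0
        = ∑ j ∈ Finset.range (J + 2), if kk j = k1 then (1:ℝ) else 0 := by
      intro k1
      rw [hsM]; dsimp only
      rw [Finset.sum_comm]
      apply Finset.sum_congr rfl; intro j _
      by_cases h : kk j = k1 <;> simp [h]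
    have hcol : ∀ (v : ℕ → Θ) (θ0 : Θ),
        ∑ k1, ∑ j ∈ Finset.range (J + 2), (if kk j = k1 ∧ v j = θ0 then (1:ℝ) else 0)
        = ∑ j ∈ Finset.range (J + 2), if v j = θ0 then (1:ℝ) else 0 := by
      intro v θ0
      rw [Finset.sum_comm]
      apply Finset.sum_congr rfl; intro j _
      rw [Finset.sum_eq_single_of_mem (kk j) (Finset.mem_univ _)]
      · by_cases h : v j = θ0
        · rw [if_pos ⟨rfl, h⟩, if_pos h]
        · rw [if_neg (fun hh => h hh.2), if_neg h]
      · intro b _ hne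
        rw [if_neg]
        rintro ⟨h1, -⟩; exact hne h1.symm
    have htele : ∀ θ0 : Θ, (∑ j ∈ Finset.range (J + 2), if ww (j + 1) = θ0 then (1:ℝ) else 0)
        = ∑ j ∈ Finset.range (J + 2), if ww j = θ0 then (1:ℝ) else 0 := by
      intro θ0
      have h1 := Finset.sum_range_succ (fun j => if ww j = θ0 then (1:ℝ) else 0) (J + 2)
      have h2 := Finset.sum_range_succ' (fun j => if ww j = θ0 then (1:ℝ) else 0) (J + 2)
      have h3 : (if ww (J + 2) = θ0 then (1:ℝ) else 0) = if ww 0 = θ0 then (1:ℝ) else 0 := by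
        rw [hwn]
      rw [h1] at h2
      linarith [h2, h3]
    have hfeas : Feasible K q r' := by
      constructor
      · intro k1
        refine ⟨fun θ0 => hr'nn k1 θ0, ?_⟩
        rw [hr'2]; dsimp only
        rw [Finset.sum_add_distrib, (hr.1 k1).2]
        have hz : ∑ θ0, ε * (sP k1 θ0 - sM k1 θ0) = 0 := by
          rw [← Finset.mul_sum, Finset.sum_sub_distrib, hrowP k1, hrowM k1]
          ring
        rw [hz, add_zero]
      · intro θ0
        have hz : ∑ k1, r' k1 θ0 = ∑ k1, r k1 θ0 := by
          rw [hr'2]; dsimp only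
          rw [Finset.sum_add_distrib, ← Finset.mul_sum, Finset.sum_sub_distrib]
          rw [hsP, hsM]; dsimp only
          rw [hcol (fun j => ww (j + 1)) θ0, hcol (fun j => ww j) θ0, htele θ0]
          ring
        rw [hz]; exact hr.2 θ0
    set cf : Θ → Fin K → ℝ := fun θ' k1 => ubar u (x θ') (θv k1) with hcf
    have hsum_ind : ∀ v : ℕ → Θ,
        ∑ k1, ∑ θ', (∑ j ∈ Finset.range (J + 2),
            if kk j = k1 ∧ v j = θ' then (1:ℝ) else 0) * cf θ' k1
          = ∑ j ∈ Finset.range (J + 2), cf (v j) (kk j) := by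
      intro v
      have e1 : ∀ (k1 : Fin K) (θ' : Θ),
          (∑ j ∈ Finset.range (J + 2), if kk j = k1 ∧ v j = θ' then (1:ℝ) else 0) * cf θ' k1
          = ∑ j ∈ Finset.range (J + 2), (if kk j = k1 ∧ v j = θ' then cf θ' k1 else 0) := by
        intro k1 θ'
        rw [Finset.sum_mul]
        apply Finset.sum_congr rfl; intro j _
        rw [ite_mul, one_mul, zero_mul]
      simp only [e1]
      have e2 : ∀ k1 : Fin K,
          ∑ θ', ∑ j ∈ Finset.range (J + 2), (if kk j = k1 ∧ v j = θ' then cf θ' k1 else 0)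
          = ∑ j ∈ Finset.range (J + 2), ∑ θ', (if kk j = k1 ∧ v j = θ' then cf θ' k1 else 0) :=
        fun k1 => Finset.sum_comm
      simp only [e2]
      rw [Finset.sum_comm]
      apply Finset.sum_congr rfl; intro j _
      have e3 : ∀ k1 : Fin K, ∑ θ', (if kk j = k1 ∧ v j = θ' then cf θ' k1 else 0)
          = if kk j = k1 then cf (v j) k1 else 0 := by
        intro k1
        rw [Finset.sum_eq_single_of_mem (v j) (Finset.mem_univ _)]
        · by_cases h : kk j = k1
          · rw [if_pos ⟨h, rfl⟩, if_pos h]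
          · rw [if_neg (fun hh => h hh.1), if_neg h]
        · intro b _ hne
          rw [if_neg]
          rintro ⟨-, h2⟩; exact hne h2.symm
      rw [Finset.sum_congr rfl (fun k1 _ => e3 k1)]
      rw [Finset.sum_eq_single_of_mem (kk j) (Finset.mem_univ _)]
      · rw [if_pos rfl]
      · intro b _ hne
        rw [if_neg (fun hh => hne hh.symm)]
    have hP' : ∑ k1, ∑ θ', sP k1 θ' * cf θ' k1
        = ∑ j ∈ Finset.range (J + 2), cf (ww (j + 1)) (kk j) := by
      rw [hsP]
      exact hsum_ind (fun j => ww (j + 1))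
    have hM' : ∑ k1, ∑ θ', sM k1 θ' * cf θ' k1
        = ∑ j ∈ Finset.range (J + 2), cf (ww j) (kk j) := by
      rw [hsM]
      exact hsum_ind (fun j => ww j)
    have hpay : payoff u x K θv r' = payoff u x K θv r
        + ε / K * ((∑ j ∈ Finset.range (J + 2), cf (ww (j + 1)) (kk j))
          - ∑ j ∈ Finset.range (J + 2), cf (ww j) (kk j)) := by
      have e4 : ∀ k1 : Fin K, ubar u (liftSCF x (r' k1)) (θv k1)
          = ubar u (liftSCF x (r k1)) (θv k1)
            + ε * ((∑ θ', sP k1 θ' * cf θ' k1) - ∑ θ', sM k1 θ' * cf θ' k1) := by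
        intro k1
        rw [ubar_liftSCF, ubar_liftSCF]
        have e4a : ∀ θ', r' k1 θ' * ubar u (x θ') (θv k1)
            = r k1 θ' * ubar u (x θ') (θv k1)
              + ε * (sP k1 θ' * cf θ' k1 - sM k1 θ' * cf θ' k1) := by
          intro θ'
          simp only [hr'2, hcf]
          ring
        rw [Finset.sum_congr rfl (fun θ' _ => e4a θ')]
        rw [Finset.sum_add_distrib, ← Finset.mul_sum, Finset.sum_sub_distrib]
      rw [payoff, payoff]
      rw [Finset.sum_congr rfl (fun k1 _ => e4 k1)]
      rw [Finset.sum_add_distrib, ← Finset.mul_sum, Finset.sum_sub_distrib, hP', hM']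
      rw [add_div]
      congr 1
      ring
    -- strict cyclic monotonicity
    set θs : Fin (J + 2) → Θ := fun j => θv (kk (J + 1 - j.val)) with hθs
    have hθsx : ∀ j : Fin (J + 2), x (θs j) = g (J + 2 - j.val) := by
      intro j
      simp only [hθs]
      rw [hxk]
      have harg : J + 1 - j.val + 1 = J + 2 - j.val := by
        have := j.isLt
        omega
      rw [harg]
    have hdist : ∀ j j' : Fin (J + 2), j ≠ j' → x (θs j) ≠ x (θs j') := by
      intro j j' hne heq
      rw [hθsx, hθsx] at heq
      have hv : ∀ a : ℕ, a < J + 2 → (J + 2 - a) % (J + 2) = if a = 0 then 0 else J + 2 - a := by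
        intro a ha
        split
        · rename_i h; rw [h, Nat.sub_zero, Nat.mod_self]
        · rename_i h; exact Nat.mod_eq_of_lt (by omega)
      have hj := j.isLt
      have hj' := j'.isLt
      have heq2 : g ((J + 2 - j.val) % (J + 2)) = g ((J + 2 - j'.val) % (J + 2)) := by
        rw [gmod, gmod]; exact heq
      have hinjr := hinj _ _ (Nat.mod_lt _ (by omega)) (Nat.mod_lt _ (by omega)) heq2
      rw [hv _ hj, hv _ hj'] at hinjr
      by_cases h0 : j.val = 0
      · by_cases h0' : j'.val = 0
        · exact hne (Fin.ext (h0.trans h0'.symm))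
        · rw [if_pos h0, if_neg h0'] at hinjr; omega
      · by_cases h0' : j'.val = 0
        · rw [if_neg h0, if_pos h0'] at hinjr; omega
        · rw [if_neg h0, if_neg h0'] at hinjr
          exact hne (Fin.ext (by omega))
    have hrev : ∀ f : ℕ → ℝ, ∑ j : Fin (J + 2), f (J + 1 - j.val)
        = ∑ j ∈ Finset.range (J + 2), f j := by
      intro f
      rw [Fin.sum_univ_eq_sum_range (fun i => f (J + 1 - i)) (J + 2)]
      have := Finset.sum_range_reflect f (J + 2)
      simpa using this
    have hA : ∑ j : Fin (J + 2), ubar u (x (θs j)) (θs j)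
        = ∑ j ∈ Finset.range (J + 2), cf (ww (j + 1)) (kk j) := by
      have e6 : ∀ j : Fin (J + 2), ubar u (x (θs j)) (θs j)
          = (fun m => cf (ww (m + 1)) (kk m)) (J + 1 - j.val) := by
        intro j
        dsimp only
        rw [hcf]; dsimp only
        have hxeq : x (ww (J + 1 - j.val + 1)) = x (θs j) := by
          rw [hxw, hθs]; dsimp only
          rw [hxk]
        rw [hxeq]
      exact (Finset.sum_congr rfl (fun j _ => e6 j)).trans
        (hrev (fun m => cf (ww (m + 1)) (kk m)))
    have hB : ∑ j : Fin (J + 2), ubar u (x (θs (j + 1))) (θs j)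
        = ∑ j ∈ Finset.range (J + 2), cf (ww j) (kk j) := by
      have e7 : ∀ j : Fin (J + 2), ubar u (x (θs (j + 1))) (θs j)
          = (fun m => cf (ww m) (kk m)) (J + 1 - j.val) := by
        intro j
        dsimp only
        rw [hcf]; dsimp only
        have hval : ((j + 1 : Fin (J + 2))).val = (j.val + 1) % (J + 2) := by
          rw [Fin.add_def]
          congr 1
        have h1 : x (θs (j + 1)) = g (J + 2 - (j.val + 1) % (J + 2)) := by
          rw [hθsx, hval]
        have h2 : g (J + 2 - (j.val + 1) % (J + 2)) = g (J + 1 - j.val) := by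
          by_cases hc : j.val + 1 < J + 2
          · rw [Nat.mod_eq_of_lt hc]
            have harg2 : J + 2 - (j.val + 1) = J + 1 - j.val := by omega
            rw [harg2]
          · have hj2 : j.val + 1 = J + 2 := by have := j.isLt; omega
            rw [hj2, Nat.mod_self, Nat.sub_zero]
            have h0 : J + 1 - j.val = 0 := by omega
            rw [h0]
            have hp := hper 0
            rw [Nat.zero_add] at hp
            exact hp
        have hxeq : x (θs (j + 1)) = x (ww (J + 1 - j.val)) := by
          rw [h1, h2, hxw]
        rw [hxeq]
      exact (Finset.sum_congr rfl (fun j _ => e7 j)).trans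
        (hrev (fun m => cf (ww m) (kk m)))
    have hlt := hcm J θs hdist
    rw [hA, hB] at hlt
    have hle := hropt r' hfeas
    rw [hpay] at hle
    have hpos : 0 < ε / K * ((∑ j ∈ Finset.range (J + 2), cf (ww (j + 1)) (kk j))
        - ∑ j ∈ Finset.range (J + 2), cf (ww j) (kk j)) :=
      mul_pos (div_pos hε0 hK0) (by linarith)
    linarith
  -- no periodic cycle at all
  have nocyc : ∀ n, 2 ≤ n → ∀ g : ℕ → (X → ℝ), (∀ i, g (i + n) = g i) →
      (∀ i, 0 < Fl (g i) (g (i + 1))) → False := by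
    intro n
    induction n using Nat.strong_induction_on with
    | _ n ih =>
      intro hn g hper hedge
      by_cases hinj : ∀ i j, i < n → j < n → g i = g j → i = j
      · refine key n hn g hper hinj fun i => ?_
        obtain ⟨-, k, θ', h1, h2, h3⟩ := hFlpos _ _ (hedge i)
        exact ⟨k, θ', h1, h2, h3⟩
      · push_neg at hinj
        obtain ⟨i, j, hi, hj, hgij, hne⟩ := hinj
        -- wlog i < j
        have main : ∀ i j, i < n → j < n → g i = g j → i < j → False := by
          clear hgij hne hi hj
          intro i j hi hj hgij hlt
          set d := j - i with hd
          have hd1 : 1 ≤ d := by omega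
          have hgmod := gmod_of_per g n (by omega) hper
          by_cases hd2 : d = 1
          · -- self loop: contradiction with Fl positivity
            have := (hFlpos _ _ (hedge i)).1
            apply this
            have : i + 1 = j := by omega
            rw [this, ← hgij]
          -- shorter cycle
          have hdn : d < n := by omega
          have hd2' : 2 ≤ d := by omega
          set h : ℕ → (X → ℝ) := fun m => g (i + m % d) with hh
          refine ih d hdn hd2' h (fun m => by simp only [hh, Nat.add_mod_right]) ?_
          intro m
          rcases mod_succ_cases d m hd1 with ⟨hlt', he⟩ | ⟨heq, he⟩
          · have e1 : h m = g (i + m % d) := rfl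
            have e2 : h (m + 1) = g (i + m % d + 1) := by
              simp only [hh, he]; ring_nf
            rw [e1, e2]; exact hedge (i + m % d)
          · have e1 : h m = g (i + m % d) := rfl
            have e2 : h (m + 1) = g i := by simp only [hh, he, Nat.add_zero]
            have e3 : g (i + m % d + 1) = g i := by
              have : i + m % d + 1 = j := by omega
              rw [this, ← hgij]
            rw [e1, e2, ← e3]
            exact hedge (i + m % d)
        rcases lt_trichotomy i j with h | h | h
        · exact main i j hi hj hgij h
        · exact hne h
        · exact main j i hj hi hgij.symm h
  -- acyclicity of the flow
  have hchain : ∀ a b, Relation.TransGen (fun p q => 0 < Fl p q) a b →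
      ∃ n, ∃ c : ℕ → (X → ℝ), 1 ≤ n ∧ c 0 = a ∧ c n = b ∧
        ∀ i < n, 0 < Fl (c i) (c (i+1)) := by
    intro a b h
    induction h with
    | single hstep =>
      rename_i bb
      refine ⟨1, fun i => if i = 0 then a else bb, le_refl 1, by simp, by simp, ?_⟩
      intro i hi
      interval_cases i
      simpa using hstep
    | tail hab hstep ih =>
      rename_i bmid cnew
      obtain ⟨n, c, hn, hc0, hcn, hce⟩ := ih
      refine ⟨n + 1, fun i => if i = n + 1 then cnew else c i, by omega, ?_, by simp, ?_⟩
      · simp only [if_neg (by omega : ¬ (0 = n + 1))]; exact hc0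
      · intro i hi
        have h1 : ¬ (i = n + 1) := by omega
        simp only [if_neg h1]
        by_cases hin : i = n
        · have h2 : i + 1 = n + 1 := by rw [hin]
          rw [h2, if_pos rfl, hin, hcn]
          exact hstep
        · have h2 : ¬ (i + 1 = n + 1) := by omega
          simp only [if_neg h2]
          exact hce i (by omega)
  have hacyc : ∀ a, ¬ Relation.TransGen (fun p q => 0 < Fl p q) a a := by
    intro a h
    obtain ⟨n, c, hn, hc0, hcn, hce⟩ := hchain a a h
    by_cases hn1 : n = 1
    · subst hn1
      have := (hFlpos _ _ (hce 0 (by omega))).1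
      apply this
      rw [hc0, hcn]
    have hn2 : 2 ≤ n := by omega
    apply nocyc n hn2 (fun i => c (i % n)) (fun i => by simp only [Nat.add_mod_right])
    intro i
    rcases mod_succ_cases n i (by omega) with ⟨hlt', he⟩ | ⟨heq, he⟩
    · rw [he]; exact hce (i % n) (Nat.mod_lt _ (by omega))
    · rw [he]
      have e3 : c 0 = c (i % n + 1) := by
        rw [heq, hcn, hc0]
      rw [e3]
      exact hce (i % n) (Nat.mod_lt _ (by omega))
  have hflow := flow_count Fl hFlnn hacyc L
  -- bound on the LHS by total flow
  have tv_self : ∀ μ : X → ℝ, tv μ μ = 0 := by intro μ; simp [tv]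
  have hlhs : (∑ k, tv (liftSCF x (r k)) (x (θv k))) / K ≤ ∑ a ∈ L, ∑ b ∈ L, Fl a b := by
    have hstep1 : ∀ k, tv (liftSCF x (r k)) (x (θv k)) ≤
        ∑ θ', if x θ' = x (θv k) then 0 else r k θ' := by
      intro k
      refine (tv_lift x (r k) (x (θv k)) (hr.1 k)).trans ?_
      apply Finset.sum_le_sum
      intro θ' _
      by_cases h : x θ' = x (θv k)
      · rw [if_pos h, h, tv_self, mul_zero]
      · rw [if_neg h]
        calc r k θ' * tv (x θ') (x (θv k)) ≤ r k θ' * 1 :=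
              mul_le_mul_of_nonneg_left (tv_le_one (hx _) (hx _)) ((hr.1 k).1 θ')
          _ = r k θ' := mul_one _
    have hnum : ∑ a ∈ L, ∑ b ∈ L,
        (if a = b then 0 else ∑ k, ∑ θ', if x (θv k) = b ∧ x θ' = a then r k θ' else 0)
        = ∑ k, ∑ θ', if x θ' = x (θv k) then 0 else r k θ' := by
      have e2 : ∀ a b : X → ℝ,
          (if a = b then (0:ℝ) else ∑ k, ∑ θ', if x (θv k) = b ∧ x θ' = a then r k θ' else 0)
          = ∑ k, ∑ θ', if ¬ a = b ∧ x (θv k) = b ∧ x θ' = a then r k θ' else 0 := by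
        intro a b
        by_cases h : a = b
        · simp [h]
        · rw [if_neg h]
          apply Finset.sum_congr rfl; intro k _
          apply Finset.sum_congr rfl; intro θ' _
          by_cases hc : x (θv k) = b ∧ x θ' = a
          · rw [if_pos hc, if_pos ⟨h, hc⟩]
          · rw [if_neg hc, if_neg (fun hh => hc hh.2)]
      simp only [e2]
      have swap4 : ∀ f : (X→ℝ) → (X→ℝ) → Fin K → Θ → ℝ,
          ∑ a ∈ L, ∑ b ∈ L, ∑ k, ∑ θ', f a b k θ'
            = ∑ k, ∑ θ', ∑ a ∈ L, ∑ b ∈ L, f a b k θ' := by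
        intro f
        have h1 : ∀ a, ∑ b ∈ L, ∑ k, ∑ θ', f a b k θ'
            = ∑ k, ∑ θ', ∑ b ∈ L, f a b k θ' := by
          intro a
          rw [Finset.sum_comm]
          apply Finset.sum_congr rfl; intro k _
          rw [Finset.sum_comm]
        rw [Finset.sum_congr rfl (fun a _ => h1 a), Finset.sum_comm]
        apply Finset.sum_congr rfl; intro k _
        rw [Finset.sum_comm]
      rw [swap4]
      have inner : ∀ (k : Fin K) (θ' : Θ),
          ∑ a ∈ L, ∑ b ∈ L, (if ¬ a = b ∧ x (θv k) = b ∧ x θ' = a then r k θ' else 0)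
            = if x θ' = x (θv k) then 0 else r k θ' := by
        intro k θ'
        have hbmem : x (θv k) ∈ L := Finset.mem_image_of_mem x (Finset.mem_univ _)
        have hamem : x θ' ∈ L := Finset.mem_image_of_mem x (Finset.mem_univ _)
        have hin : ∀ a, ∑ b ∈ L, (if ¬ a = b ∧ x (θv k) = b ∧ x θ' = a then r k θ' else 0)
            = if ¬ a = x (θv k) ∧ x θ' = a then r k θ' else 0 := by
          intro a
          rw [Finset.sum_eq_single_of_mem (x (θv k)) hbmem]
          · by_cases hc : ¬ a = x (θv k) ∧ x θ' = a
            · rw [if_pos ⟨hc.1, rfl, hc.2⟩, if_pos hc]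
            · rw [if_neg, if_neg hc]
              rintro ⟨h1, -, h3⟩; exact hc ⟨h1, h3⟩
          · intro b hb hne
            rw [if_neg]; rintro ⟨-, h2, -⟩; exact hne h2.symm
        rw [Finset.sum_congr rfl (fun a _ => hin a)]
        rw [Finset.sum_eq_single_of_mem (x θ') hamem]
        · by_cases hc : x θ' = x (θv k)
          · rw [if_neg, if_pos hc]; rintro ⟨h1, -⟩; exact h1 hc
          · rw [if_pos ⟨fun hh => hc hh, rfl⟩, if_neg hc]
        · intro a ha hne
          rw [if_neg]; rintro ⟨-, h2⟩; exact hne h2.symm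
      exact Finset.sum_congr rfl fun k _ => Finset.sum_congr rfl fun θ' _ => inner k θ'
    have eFl : ∀ a b, Fl a b = (if a = b then (0:ℝ)
        else ∑ k, ∑ θ', if x (θv k) = b ∧ x θ' = a then r k θ' else 0) / K := by
      intro a b; rw [hFl]; dsimp only
      split
      · rw [zero_div]
      · rfl
    calc (∑ k, tv (liftSCF x (r k)) (x (θv k))) / K
        ≤ (∑ k, ∑ θ', if x θ' = x (θv k) then 0 else r k θ') / K :=
          (div_le_div_iff_of_pos_right hK0).mpr (Finset.sum_le_sum fun k _ => hstep1 k)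
      _ = ∑ a ∈ L, ∑ b ∈ L, Fl a b := by
          rw [← hnum, Finset.sum_div]
          apply Finset.sum_congr rfl; intro a _
          rw [Finset.sum_div]
          exact Finset.sum_congr rfl fun b _ => (eFl a b).symm
  -- bound on divergences by tv distance
  have hdiv : ∑ a ∈ L, max (∑ b ∈ L, Fl a b - ∑ b ∈ L, Fl b a) 0 ≤ tv q (marg K θv) := by
    classical
    set qL : (X → ℝ) → ℝ := fun ℓ => ∑ θ'', if x θ'' = ℓ then q θ'' else 0 with hqL
    set mL : (X → ℝ) → ℝ := fun ℓ => ∑ θ'', if x θ'' = ℓ then marg K θv θ'' else 0 with hmL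
    have eFl : ∀ a b, Fl a b = (if a = b then (0:ℝ)
        else ∑ k, ∑ θ', if x (θv k) = b ∧ x θ' = a then r k θ' else 0) / K := by
      intro a b; rw [hFl]; dsimp only
      split
      · rw [zero_div]
      · rfl
    have e2 : ∀ a b : X → ℝ,
        (if a = b then (0:ℝ) else ∑ k, ∑ θ', if x (θv k) = b ∧ x θ' = a then r k θ' else 0)
        = ∑ k, ∑ θ', if ¬ a = b ∧ x (θv k) = b ∧ x θ' = a then r k θ' else 0 := by
      intro a b
      by_cases h : a = b
      · simp [h]
      · rw [if_neg h]
        apply Finset.sum_congr rfl; intro k _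
        apply Finset.sum_congr rfl; intro θ' _
        by_cases hc : x (θv k) = b ∧ x θ' = a
        · rw [if_pos hc, if_pos ⟨h, hc⟩]
        · rw [if_neg hc, if_neg (fun hh => hc hh.2)]
    have swapL : ∀ f : (X→ℝ) → Fin K → Θ → ℝ,
        ∑ b ∈ L, ∑ k, ∑ θ', f b k θ' = ∑ k, ∑ θ', ∑ b ∈ L, f b k θ' := by
      intro f
      rw [Finset.sum_comm]
      apply Finset.sum_congr rfl; intro k _
      rw [Finset.sum_comm]
    -- outflow and inflow formulas
    have hout : ∀ ℓ, ∑ b ∈ L, Fl ℓ b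
        = (∑ k, ∑ θ', if ¬ ℓ = x (θv k) ∧ x θ' = ℓ then r k θ' else 0) / K := by
      intro ℓ
      rw [Finset.sum_congr rfl (fun b _ => eFl ℓ b), ← Finset.sum_div]
      congr 1
      rw [Finset.sum_congr rfl (fun b _ => e2 ℓ b), swapL]
      apply Finset.sum_congr rfl; intro k _
      apply Finset.sum_congr rfl; intro θ' _
      have hbmem : x (θv k) ∈ L := Finset.mem_image_of_mem x (Finset.mem_univ _)
      rw [Finset.sum_eq_single_of_mem (x (θv k)) hbmem]
      · by_cases hc : ¬ ℓ = x (θv k) ∧ x θ' = ℓ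
        · rw [if_pos ⟨hc.1, rfl, hc.2⟩, if_pos hc]
        · rw [if_neg, if_neg hc]
          rintro ⟨h1, -, h3⟩; exact hc ⟨h1, h3⟩
      · intro b hb hne
        rw [if_neg]; rintro ⟨-, h2, -⟩; exact hne h2.symm
    have hin2 : ∀ ℓ, ∑ b ∈ L, Fl b ℓ
        = (∑ k, ∑ θ', if x (θv k) = ℓ ∧ ¬ x θ' = ℓ then r k θ' else 0) / K := by
      intro ℓ
      rw [Finset.sum_congr rfl (fun b _ => eFl b ℓ), ← Finset.sum_div]
      congr 1
      rw [Finset.sum_congr rfl (fun b _ => e2 b ℓ), swapL]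
      apply Finset.sum_congr rfl; intro k _
      apply Finset.sum_congr rfl; intro θ' _
      have hamem : x θ' ∈ L := Finset.mem_image_of_mem x (Finset.mem_univ _)
      rw [Finset.sum_eq_single_of_mem (x θ') hamem]
      · by_cases hc : x (θv k) = ℓ ∧ ¬ x θ' = ℓ
        · rw [if_pos ⟨hc.2, hc.1, rfl⟩, if_pos hc]
        · rw [if_neg, if_neg hc]
          rintro ⟨h1, h2, -⟩; exact hc ⟨h2, h1⟩
      · intro b hb hne
        rw [if_neg]; rintro ⟨-, -, h3⟩; exact hne h3.symm
    -- divergence identity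
    have hAdiv : ∀ ℓ, ∑ b ∈ L, Fl ℓ b - ∑ b ∈ L, Fl b ℓ = qL ℓ - mL ℓ := by
      intro ℓ
      rw [hout, hin2, div_sub_div_same]
      have hptw : ∑ k, ∑ θ', ((if ¬ ℓ = x (θv k) ∧ x θ' = ℓ then r k θ' else 0)
            - (if x (θv k) = ℓ ∧ ¬ x θ' = ℓ then r k θ' else 0))
          = ∑ k, ∑ θ', ((if x θ' = ℓ then r k θ' else 0)
            - (if x (θv k) = ℓ then r k θ' else 0)) := by
        apply Finset.sum_congr rfl; intro k _
        apply Finset.sum_congr rfl; intro θ' _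
        by_cases h1 : x θ' = ℓ <;> by_cases h2 : x (θv k) = ℓ
        · rw [if_neg (show ¬(¬ ℓ = x (θv k) ∧ x θ' = ℓ) from fun hh => hh.1 h2.symm),
              if_neg (show ¬(x (θv k) = ℓ ∧ ¬ x θ' = ℓ) from fun hh => hh.2 h1),
              if_pos h1, if_pos h2]
          ring
        · rw [if_pos (show (¬ ℓ = x (θv k) ∧ x θ' = ℓ) from ⟨fun hh => h2 hh.symm, h1⟩),
              if_neg (show ¬(x (θv k) = ℓ ∧ ¬ x θ' = ℓ) from fun hh => h2 hh.1),
              if_pos h1, if_neg h2]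
        · rw [if_neg (show ¬(¬ ℓ = x (θv k) ∧ x θ' = ℓ) from fun hh => h1 hh.2),
              if_pos (show (x (θv k) = ℓ ∧ ¬ x θ' = ℓ) from ⟨h2, h1⟩),
              if_neg h1, if_pos h2]
        · rw [if_neg (show ¬(¬ ℓ = x (θv k) ∧ x θ' = ℓ) from fun hh => h1 hh.2),
              if_neg (show ¬(x (θv k) = ℓ ∧ ¬ x θ' = ℓ) from fun hh => h2 hh.1),
              if_neg h1, if_neg h2]
      have e3 : (∑ k, ∑ θ', if ¬ ℓ = x (θv k) ∧ x θ' = ℓ then r k θ' else 0)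
          - (∑ k, ∑ θ', if x (θv k) = ℓ ∧ ¬ x θ' = ℓ then r k θ' else 0)
          = (∑ k, ∑ θ', if x θ' = ℓ then r k θ' else 0)
            - (∑ k, ∑ θ', if x (θv k) = ℓ then r k θ' else 0) := by
        simp only [Finset.sum_sub_distrib] at hptw
        exact hptw
      rw [e3]
      -- first piece equals K * qL ℓ
      have hfst : ∑ k, ∑ θ', (if x θ' = ℓ then r k θ' else 0) = K * qL ℓ := by
        rw [Finset.sum_comm, hqL]
        dsimp only
        rw [Finset.mul_sum]
        apply Finset.sum_congr rfl; intro θ' _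
        by_cases h : x θ' = ℓ
        · simp only [if_pos h]
          have := hr.2 θ'
          field_simp at this ⊢
          linarith [this]
        · simp [h]
      -- second piece equals K * mL ℓ
      have hsnd : ∑ k, ∑ θ', (if x (θv k) = ℓ then r k θ' else 0) = K * mL ℓ := by
        have h1 : ∀ k : Fin K, ∑ θ', (if x (θv k) = ℓ then r k θ' else 0)
            = if x (θv k) = ℓ then 1 else 0 := by
          intro k
          by_cases h : x (θv k) = ℓ
          · simp only [if_pos h]; exact (hr.1 k).2
          · simp [h]
        rw [Finset.sum_congr rfl (fun k _ => h1 k)]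
        have h2 : ∀ k : Fin K, (if x (θv k) = ℓ then (1:ℝ) else 0)
            = ∑ θ'', if x θ'' = ℓ ∧ θv k = θ'' then 1 else 0 := by
          intro k
          rw [Finset.sum_eq_single_of_mem (θv k) (Finset.mem_univ _)]
          · by_cases h : x (θv k) = ℓ
            · rw [if_pos h, if_pos ⟨h, rfl⟩]
            · rw [if_neg h, if_neg (fun hh => h hh.1)]
          · intro b hb hne
            rw [if_neg]; rintro ⟨-, h2⟩; exact hne h2.symm
        rw [Finset.sum_congr rfl (fun k _ => h2 k), Finset.sum_comm, hmL]
        dsimp only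
        rw [Finset.mul_sum]
        apply Finset.sum_congr rfl; intro θ'' _
        by_cases h : x θ'' = ℓ
        · simp only [if_pos h]
          have hcount : ∑ k : Fin K, (if x θ'' = ℓ ∧ θv k = θ'' then (1:ℝ) else 0)
              = ((Finset.univ.filter (fun k => θv k = θ'')).card : ℝ) := by
            rw [Finset.card_filter]
            push_cast
            apply Finset.sum_congr rfl; intro k _
            by_cases h2 : θv k = θ''
            · rw [if_pos ⟨h, h2⟩, if_pos h2]
            · rw [if_neg (fun hh => h2 hh.2), if_neg h2]
          rw [hcount, marg]
          show _ = (K:ℝ) * (_ / (K:ℝ))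
          rw [mul_div_assoc']
          exact (mul_div_cancel_left₀ _ (ne_of_gt hK0)).symm
        · simp [h]
      rw [hfst, hsnd, ← mul_sub, mul_div_cancel_left₀ _ (ne_of_gt hK0)]
    rw [Finset.sum_congr rfl (fun ℓ _ => by rw [hAdiv ℓ])]
    -- now bound ∑ max (qL - mL) 0
    have hmax : ∀ a : ℝ, max a 0 = (a + |a|) / 2 := by
      intro a
      rcases le_or_gt a 0 with h | h
      · rw [max_eq_right h, abs_of_nonpos h]; ring
      · rw [max_eq_left h.le, abs_of_pos h]; ring
    have hsumqL : ∑ ℓ ∈ L, qL ℓ = 1 := by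
      rw [hqL]
      dsimp only
      rw [Finset.sum_comm]
      rw [Finset.sum_congr rfl (fun θ'' _ => Finset.sum_eq_single_of_mem (x θ'')
        (Finset.mem_image_of_mem x (Finset.mem_univ θ''))
        (fun b _ hne => if_neg (fun hh => hne hh.symm)) )]
      simp only [if_pos rfl]
      exact hq.2
    have hmarg1 : ∑ θ'' : Θ, marg K θv θ'' = 1 := by
      simp only [marg]
      rw [← Finset.sum_div]
      have : ∑ θ'' : Θ, ((Finset.univ.filter (fun k => θv k = θ'')).card : ℝ) = K := by
        have hcf := Finset.card_eq_sum_card_fiberwise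
          (f := θv) (s := Finset.univ) (t := Finset.univ) (fun k _ => Finset.mem_univ _)
        rw [Finset.card_univ, Fintype.card_fin] at hcf
        push_cast [hcf]
        rfl
      rw [this]
      field_simp
    have hsummL : ∑ ℓ ∈ L, mL ℓ = 1 := by
      rw [hmL]
      dsimp only
      rw [Finset.sum_comm]
      rw [Finset.sum_congr rfl (fun θ'' _ => Finset.sum_eq_single_of_mem (x θ'')
        (Finset.mem_image_of_mem x (Finset.mem_univ θ''))
        (fun b _ hne => if_neg (fun hh => hne hh.symm)) )]
      simp only [if_pos rfl]
      exact hmarg1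
    have habs : ∑ ℓ ∈ L, |qL ℓ - mL ℓ| ≤ ∑ θ'', |q θ'' - marg K θv θ''| := by
      have hper : ∀ ℓ, |qL ℓ - mL ℓ|
          ≤ ∑ θ'', if x θ'' = ℓ then |q θ'' - marg K θv θ''| else 0 := by
        intro ℓ
        have e4 : qL ℓ - mL ℓ = ∑ θ'', if x θ'' = ℓ then q θ'' - marg K θv θ'' else 0 := by
          rw [hqL, hmL]
          dsimp only
          rw [← Finset.sum_sub_distrib]
          apply Finset.sum_congr rfl; intro θ'' _
          by_cases h : x θ'' = ℓ <;> simp [h]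
        rw [e4]
        refine (Finset.abs_sum_le_sum_abs _ _).trans ?_
        apply Finset.sum_le_sum
        intro θ'' _
        by_cases h : x θ'' = ℓ <;> simp [h]
      refine (Finset.sum_le_sum (fun ℓ _ => hper ℓ)).trans ?_
      rw [Finset.sum_comm]
      apply Finset.sum_le_sum
      intro θ'' _
      rw [Finset.sum_eq_single_of_mem (x θ'')
        (Finset.mem_image_of_mem x (Finset.mem_univ θ''))
        (fun b _ hne => if_neg (fun hh => hne hh.symm))]
      rw [if_pos rfl]
    have hzero2 : ∑ ℓ ∈ L, (qL ℓ - mL ℓ) = 0 := by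
      rw [Finset.sum_sub_distrib, hsumqL, hsummL]; ring
    calc ∑ ℓ ∈ L, max (qL ℓ - mL ℓ) 0
        = ∑ ℓ ∈ L, ((qL ℓ - mL ℓ) + |qL ℓ - mL ℓ|) / 2 :=
          Finset.sum_congr rfl fun ℓ _ => hmax _
      _ = ((∑ ℓ ∈ L, (qL ℓ - mL ℓ)) + ∑ ℓ ∈ L, |qL ℓ - mL ℓ|) / 2 := by
          rw [← Finset.sum_div, Finset.sum_add_distrib]
      _ ≤ (0 + ∑ θ'', |q θ'' - marg K θv θ''|) / 2 := by
          rw [hzero2]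
          have := habs
          linarith
      _ = tv q (marg K θv) := by rw [tv, zero_add]
  have hDnn : 0 ≤ ∑ a ∈ L, max (∑ b ∈ L, Fl a b - ∑ b ∈ L, Fl b a) 0 :=
    Finset.sum_nonneg fun a _ => le_max_right _ _
  have hcard : (L.card : ℝ) ≤ (Fintype.card Θ : ℝ) := by
    have := Finset.card_image_le (s := (Finset.univ : Finset Θ)) (f := x)
    rw [Finset.card_univ] at this
    exact_mod_cast this
  have hcard1 : (1:ℝ) ≤ (Fintype.card Θ : ℝ) := by
    have := Fintype.card_pos (α := Θ)
    exact_mod_cast this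
  calc (∑ k, tv (liftSCF x (r k)) (x (θv k))) / K
      ≤ ∑ a ∈ L, ∑ b ∈ L, Fl a b := hlhs
    _ ≤ ((L.card : ℝ) - 1) * ∑ a ∈ L, max (∑ b ∈ L, Fl a b - ∑ b ∈ L, Fl b a) 0 := hflow
    _ ≤ ((Fintype.card Θ : ℝ) - 1) * ∑ a ∈ L, max (∑ b ∈ L, Fl a b - ∑ b ∈ L, Fl b a) 0 := by
        apply mul_le_mul_of_nonneg_right _ hDnn
        linarith
    _ ≤ ((Fintype.card Θ : ℝ) - 1) * tv q (marg K θv) := by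
        apply mul_le_mul_of_nonneg_left hdiv
        linarith
end

section
/- Let Θ and X be finite nonempty sets and let x : Θ → Δ(X) be injective in the strong sense that for distinct θ, θ' ∈ Θ the lotteries x(θ) and x(θ') have disjoint supports. Fix a quota q ∈ Δ(Θ), an integer K ≥ 1, and a type vector θ = (θ^1,…,θ^K) ∈ Θ^K. Then EVERY feasible report vector r = (r^1,…,r^K) at quota q satisfies (1/K)·Σ_{k=1}^K ‖x(r^k) − x(θ^k)‖ ≥ ‖q − marg θ‖. -/
open Finset

lemma tv_ge_sum_diff {Z : Type*} [Fintype Z] (p q : Z → ℝ)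
    (h : ∑ z, p z = ∑ z, q z) (S : Finset Z) :
    ∑ z ∈ S, (q z - p z) ≤ tv p q := by
  classical
  have hsplit : ∑ z ∈ S, |p z - q z| + ∑ z ∈ Sᶜ, |p z - q z| = ∑ z, |p z - q z| :=
    Finset.sum_add_sum_compl S _
  have hzero : ∑ z ∈ S, (q z - p z) + ∑ z ∈ Sᶜ, (q z - p z) = 0 := by
    have := Finset.sum_add_sum_compl S (fun z => q z - p z)
    rw [this, Finset.sum_sub_distrib]
    linarith
  have h1 : ∑ z ∈ S, (q z - p z) ≤ ∑ z ∈ S, |p z - q z| :=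
    Finset.sum_le_sum fun z _ => by
      rw [abs_sub_comm]; exact le_abs_self _
  have h2 : ∑ z ∈ Sᶜ, -(q z - p z) ≤ ∑ z ∈ Sᶜ, |p z - q z| :=
    Finset.sum_le_sum fun z _ => by
      have : -(q z - p z) = p z - q z := by ring
      rw [this]; exact le_abs_self _
  rw [Finset.sum_neg_distrib] at h2
  unfold tv
  linarith

lemma tv_eq_one_sub {Z : Type*} [Fintype Z] (p q : Z → ℝ)
    (hp : ∑ z, p z = 1) (hq : ∑ z, q z = 1) :
    tv p q = 1 - ∑ z, min (p z) (q z) := by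
  unfold tv
  have h : ∀ z, |p z - q z| = p z + q z - 2 * min (p z) (q z) := by
    intro z; rcases le_total (p z) (q z) with h | h
    · rw [min_eq_left h, abs_of_nonpos (by linarith)]; ring
    · rw [min_eq_right h, abs_of_nonneg (by linarith)]; ring
  rw [Finset.sum_congr rfl (fun z _ => h z), Finset.sum_sub_distrib,
    Finset.sum_add_distrib, ← Finset.mul_sum, hp, hq]
  ring

/-- Lower bound for injective social choice functions. If
the lotteries `x(θ)` have pairwise disjoint supports, then EVERY feasible
report vector at quota `q` has average decision error at least
`‖q − marg θv‖`. -/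
theorem quota_expost_lower_bound {Θ X : Type*} [Fintype Θ] [Fintype X]
    [Nonempty Θ] [Nonempty X] [DecidableEq Θ]
    (x : Θ → X → ℝ) (hx : ∀ θ, IsProbVec (x θ))
    (hinj : ∀ θ θ' : Θ, θ ≠ θ' → ∀ a, x θ a = 0 ∨ x θ' a = 0)
    (q : Θ → ℝ) (hq : IsProbVec q) (K : ℕ) (hK : 1 ≤ K) (θv : Fin K → Θ)
    (r : Fin K → Θ → ℝ) (hr : Feasible K q r) :
    tv q (marg K θv) ≤ (∑ k, tv (liftSCF x (r k)) (x (θv k))) / K := by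
  classical
  have hK0 : (0:ℝ) < K := by exact_mod_cast Nat.lt_of_lt_of_le Nat.zero_lt_one hK
  -- Step A: pointwise bound  1 - r k (θv k) ≤ tv (liftSCF x (r k)) (x (θv k))
  have stepA : ∀ k, 1 - r k (θv k) ≤ tv (liftSCF x (r k)) (x (θv k)) := by
    intro k
    set p := liftSCF x (r k) with hp
    set θk := θv k
    have hpsum : ∑ a, p a = 1 := by
      simp only [hp, liftSCF]
      rw [Finset.sum_comm]
      have : ∀ θ' : Θ, ∑ a, r k θ' * x θ' a = r k θ' := by
        intro θ'; rw [← Finset.mul_sum, (hx θ').2, mul_one]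
      rw [Finset.sum_congr rfl (fun θ' _ => this θ')]
      exact (hr.1 k).2
    have hqsum : ∑ a, x θk a = 1 := (hx θk).2
    set S : Finset X := Finset.univ.filter (fun a => x θk a ≠ 0) with hS
    have hqS : ∑ a ∈ S, x θk a = 1 := by
      rw [hS, Finset.sum_filter_ne_zero]; exact hqsum
    have hpS : ∑ a ∈ S, p a = r k θk := by
      have hin : ∀ a ∈ S, p a = r k θk * x θk a := by
        intro a ha
        have hane : x θk a ≠ 0 := (Finset.mem_filter.mp ha).2
        simp only [hp, liftSCF]
        refine Finset.sum_eq_single θk (fun θ' _ hne => ?_) (by simp)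
        rcases hinj θk θ' (Ne.symm hne) a with h0 | h0
        · exact absurd h0 hane
        · rw [h0, mul_zero]
      rw [Finset.sum_congr rfl hin, ← Finset.mul_sum, hqS, mul_one]
    have := tv_ge_sum_diff p (x θk) (by rw [hpsum, hqsum]) S
    rw [Finset.sum_sub_distrib, hqS, hpS] at this
    exact this
  -- Step B:  ∑ k, r k (θv k) ≤ K * ∑ θ', min (q θ') (marg K θv θ')
  have stepB : ∑ k, r k (θv k) ≤ ∑ θ' : Θ, (K : ℝ) * min (q θ') (marg K θv θ') := by
    have hfib : ∑ θ' : Θ, ∑ k ∈ Finset.univ.filter (fun k => θv k = θ'), r k (θv k)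
        = ∑ k, r k (θv k) := Finset.sum_fiberwise _ _ _
    rw [← hfib]
    refine Finset.sum_le_sum fun θ' _ => ?_
    set F := Finset.univ.filter (fun k => θv k = θ') with hF
    have hcong : ∑ k ∈ F, r k (θv k) = ∑ k ∈ F, r k θ' :=
      Finset.sum_congr rfl fun k hk => by
        rw [(Finset.mem_filter.mp hk).2]
    rw [hcong]
    have hb1 : ∑ k ∈ F, r k θ' ≤ (K : ℝ) * q θ' := by
      have hsub : ∑ k ∈ F, r k θ' ≤ ∑ k, r k θ' :=
        Finset.sum_le_sum_of_subset_of_nonneg (Finset.subset_univ F)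
          (fun k _ _ => (hr.1 k).1 θ')
      have hq' : ∑ k, r k θ' = K * q θ' := by
        have := hr.2 θ'
        field_simp at this
        linarith [this]
      linarith
    have hb2 : ∑ k ∈ F, r k θ' ≤ (K : ℝ) * marg K θv θ' := by
      have hle1 : ∀ k, r k θ' ≤ 1 := by
        intro k
        have := Finset.single_le_sum (f := r k) (fun z _ => (hr.1 k).1 z)
          (Finset.mem_univ θ')
        rw [(hr.1 k).2] at this
        exact this
      have : ∑ k ∈ F, r k θ' ≤ ∑ k ∈ F, (1:ℝ) :=
        Finset.sum_le_sum fun k _ => hle1 k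
      rw [Finset.sum_const, nsmul_eq_mul, mul_one] at this
      have hm : (K : ℝ) * marg K θv θ' = F.card := by
        simp only [marg, hF]
        field_simp
      linarith
    rcases le_total (q θ') (marg K θv θ') with h | h
    · rw [min_eq_left h]; exact hb1
    · rw [min_eq_right h]; exact hb2
  -- Step C: tv q marg = 1 - ∑ min
  have hmargsum : ∑ θ' : Θ, marg K θv θ' = 1 := by
    simp only [marg]
    rw [← Finset.sum_div]
    have : ∑ θ' : Θ, ((Finset.univ.filter (fun k => θv k = θ')).card : ℝ)
        = ((Finset.univ : Finset (Fin K)).card : ℝ) := by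
      rw [Finset.card_eq_sum_card_fiberwise (f := θv) (t := Finset.univ)
        (fun k _ => Finset.mem_univ _)]
      push_cast
      rfl
    rw [this, Finset.card_univ, Fintype.card_fin]
    field_simp
  have stepC : tv q (marg K θv) = 1 - ∑ θ' : Θ, min (q θ') (marg K θv θ') :=
    tv_eq_one_sub _ _ hq.2 hmargsum
  -- Combine
  have hsumtv : (K : ℝ) - ∑ k, r k (θv k) ≤ ∑ k, tv (liftSCF x (r k)) (x (θv k)) := by
    have := Finset.sum_le_sum (fun k (_ : k ∈ Finset.univ) => stepA k)
    rw [Finset.sum_sub_distrib, Finset.sum_const, nsmul_eq_mul, mul_one,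
      Finset.card_univ, Fintype.card_fin] at this
    linarith
  rw [le_div_iff₀ hK0, stepC]
  rw [← Finset.mul_sum] at stepB
  nlinarith [stepB, hsumtv]
end

section
/- Let Θ and X be finite nonempty sets, let x : Θ → X be a deterministic map, let q ∈ Δ(Θ), and let K ≥ 1. Let x_* : Δ(Θ) → Δ(X) denote the pushforward x_*(p)(a) = Σ_{θ' : x(θ') = a} p(θ'). Then the set { (x_*(r^1),…,x_*(r^K)) : r^k ∈ Δ(Θ) for all k and (1/K)·Σ_k r^k = q } equals the set { (x̄^1,…,x̄^K) ∈ Δ(X)^K : (1/K)·Σ_k x̄^k = x_*(q) }. -/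
open Finset

/-- Pushforward of `p ∈ Δ(Θ)` under the deterministic map `x : Θ → X`:
`x_*(p)(a) = Σ_{θ' : x θ' = a} p θ'`. -/
noncomputable def push {Θ X : Type*} [Fintype Θ] [DecidableEq X]
    (x : Θ → X) (p : Θ → ℝ) : X → ℝ :=
  fun a => ∑ θ' ∈ Finset.univ.filter (fun θ' => x θ' = a), p θ'

lemma push_sum {Θ X : Type*} [Fintype Θ] [Fintype X] [DecidableEq X]
    (x : Θ → X) (p : Θ → ℝ) : ∑ a, push x p a = ∑ θ, p θ :=
  Finset.sum_fiberwise _ _ _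

lemma push_nonneg {Θ X : Type*} [Fintype Θ] [Fintype X] [DecidableEq X]
    (x : Θ → X) (p : Θ → ℝ) (hp : ∀ θ, 0 ≤ p θ) (a : X) : 0 ≤ push x p a :=
  Finset.sum_nonneg fun θ _ => hp θ

lemma le_push {Θ X : Type*} [Fintype Θ] [Fintype X] [DecidableEq X]
    (x : Θ → X) (p : Θ → ℝ) (hp : ∀ θ, 0 ≤ p θ) (θ : Θ) :
    p θ ≤ push x p (x θ) := by
  apply Finset.single_le_sum (f := p) (fun i _ => hp i)
  simp

/-- Implementation via decision restrictions. For a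
deterministic map `x`, the pushforwards of feasible report vectors at quota `q`
are exactly the vectors of lotteries over decisions averaging to `x_*(q)`. -/
theorem quota_decision_menu_eq {Θ X : Type*} [Fintype Θ] [Fintype X]
    [Nonempty Θ] [Nonempty X] [DecidableEq X]
    (x : Θ → X) (q : Θ → ℝ) (hq : IsProbVec q) (K : ℕ) (hK : 1 ≤ K) :
    {v : Fin K → X → ℝ |
        ∃ r : Fin K → Θ → ℝ, (∀ k, IsProbVec (r k)) ∧
          (∀ θ', (∑ k, r k θ') / K = q θ') ∧ ∀ k, v k = push x (r k)} =
      {v : Fin K → X → ℝ |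
        (∀ k, IsProbVec (v k)) ∧ ∀ a, (∑ k, v k a) / K = push x q a} := by
  have hK0 : (0:ℝ) < K := by exact_mod_cast Nat.lt_of_lt_of_le Nat.zero_lt_one hK
  ext v
  simp only [Set.mem_setOf_eq]
  constructor
  · rintro ⟨r, hr, havg, hv⟩
    constructor
    · intro k
      rw [hv k]
      exact ⟨push_nonneg x _ (hr k).1, by rw [push_sum]; exact (hr k).2⟩
    · intro a
      have : ∑ k, v k a = ∑ k, ∑ θ ∈ Finset.univ.filter (fun θ => x θ = a), r k θ := by
        simp_rw [fun k => hv k]; rfl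
      rw [this, Finset.sum_comm]
      unfold push
      rw [Finset.sum_div]
      exact Finset.sum_congr rfl fun θ _ => havg θ
  · rintro ⟨hv, havg⟩
    classical
    -- when push x q a = 0, all v k a = 0
    have hv0 : ∀ a, push x q a = 0 → ∀ k, v k a = 0 := by
      intro a ha k
      have hsum : ∑ k, v k a = 0 := by
        have := havg a
        rw [ha] at this
        field_simp at this
        simpa using this
      have : ∀ k ∈ Finset.univ, v k a = 0 :=
        (Finset.sum_eq_zero_iff_of_nonneg (fun k _ => (hv k).1 a)).1 hsum
      exact this k (Finset.mem_univ k)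
    set r : Fin K → Θ → ℝ := fun k θ =>
      if push x q (x θ) = 0 then 0 else v k (x θ) * q θ / push x q (x θ) with hrdef
    have hrpush : ∀ k a, push x (r k) a = v k a := by
      intro k a
      by_cases ha : push x q a = 0
      · rw [hv0 a ha k]
        unfold push
        apply Finset.sum_eq_zero
        intro θ hθ
        have hxθ : x θ = a := by simpa using hθ
        simp [hrdef, hxθ, ha]
      · unfold push
        have : ∀ θ ∈ Finset.univ.filter (fun θ => x θ = a),
            r k θ = v k a * q θ / push x q a := by
          intro θ hθ
          have hxθ : x θ = a := by simpa using hθ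
          simp [hrdef, hxθ, ha]
        rw [Finset.sum_congr rfl this]
        rw [← Finset.sum_div]
        rw [← Finset.mul_sum]
        have : ∑ θ ∈ Finset.univ.filter (fun θ => x θ = a), q θ = push x q a := rfl
        rw [this]
        field_simp
    refine ⟨r, ?_, ?_, fun k => funext fun a => (hrpush k a).symm⟩
    · intro k
      constructor
      · intro θ
        by_cases h : push x q (x θ) = 0
        · simp [hrdef, h]
        · simp only [hrdef, h, if_false]
          apply div_nonneg (mul_nonneg ((hv k).1 _) (hq.1 θ))
          exact push_nonneg x q hq.1 _
      · have : ∑ θ, r k θ = ∑ a, push x (r k) a := (push_sum x (r k)).symm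
        rw [this]
        simp_rw [hrpush]
        exact (hv k).2
    · intro θ
      by_cases h : push x q (x θ) = 0
      · have hq0 : q θ = 0 := le_antisymm (h ▸ le_push x q hq.1 θ) (hq.1 θ)
        simp [hrdef, h, hq0]
      · have : ∑ k, r k θ = (∑ k, v k (x θ)) * q θ / push x q (x θ) := by
          simp only [hrdef, h, if_false]
          rw [← Finset.sum_div, ← Finset.sum_mul]
        rw [this]
        have h2 := havg (x θ)
        have hS : (∑ k, v k (x θ)) = push x q (x θ) * K := by
          rw [← h2]; field_simp
        rw [hS]
        field_simp
end

section
/- Let Θ and X be finite nonempty sets, u : X × Θ → ℝ, and x : Θ → Δ(X) a social choice function. Then x is cyclically monotone if and only if x is one-shot implementable with transfers, i.e., there exists T : Θ → ℝ such that for all θ, θ' ∈ Θ, ū(x(θ),θ) − T(θ) ≥ ū(x(θ'),θ) − T(θ'). -/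
open Finset

section Walks

variable {Θ : Type*} (w : Θ → Θ → ℝ)

/-- Weight of a walk given by a list of vertices. -/
noncomputable def Wsum : List Θ → ℝ
  | [] => 0
  | [_] => 0
  | a :: b :: t => w a b + Wsum (b :: t)

@[simp] lemma Wsum_nil : Wsum w ([] : List Θ) = 0 := rfl
@[simp] lemma Wsum_single (a : Θ) : Wsum w [a] = 0 := rfl
@[simp] lemma Wsum_cons_cons (a b : Θ) (t : List Θ) :
    Wsum w (a :: b :: t) = w a b + Wsum w (b :: t) := rfl

lemma Wsum_split (xs : List Θ) (y : Θ) (ys : List Θ) :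
    Wsum w (xs ++ y :: ys) = Wsum w (xs ++ [y]) + Wsum w (y :: ys) := by
  induction xs with
  | nil => simp
  | cons x xs ih =>
    cases xs with
    | nil => simp
    | cons z zs =>
      simp only [List.cons_append, Wsum_cons_cons] at *
      rw [ih]; ring

lemma Wsum_ofFn : ∀ (m : ℕ) (v : Fin (m + 1) → Θ),
    Wsum w (List.ofFn v) = ∑ i : Fin m, w (v i.castSucc) (v i.succ) := by
  intro m
  induction m with
  | zero => intro v; simp [List.ofFn_succ]
  | succ m ih =>
    intro v
    have h1 : List.ofFn v = v 0 :: List.ofFn fun i : Fin (m + 1) => v i.succ :=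
      List.ofFn_succ
    have h2 : (List.ofFn fun i : Fin (m + 1) => v i.succ) =
        v (Fin.succ 0) :: List.ofFn fun i : Fin m => v i.succ.succ :=
      List.ofFn_succ
    rw [h1, h2, Wsum_cons_cons, ← h2, ih fun i => v i.succ]
    rw [Fin.sum_univ_succ]
    congr 1

lemma exists_dup {l : List Θ} (h : ¬ l.Nodup) :
    ∃ p x m s, l = p ++ x :: m ++ x :: s := by
  induction l with
  | nil => simp at h
  | cons y t ih =>
    rw [List.nodup_cons] at h
    by_cases hy : y ∈ t
    · obtain ⟨m, s, rfl⟩ := List.append_of_mem hy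
      exact ⟨[], y, m, s, rfl⟩
    · have ht : ¬ t.Nodup := by tauto
      obtain ⟨p, x, m, s, rfl⟩ := ih ht
      exact ⟨y :: p, x, m, s, rfl⟩

end Walks

section Potential

variable {Θ : Type*} [Fintype Θ] [Nonempty Θ] {w : Θ → Θ → ℝ}

lemma cycle_le (hzero : ∀ a, w a a = 0)
    (hcyc : ∀ (k : ℕ) (v : Fin (k + 2) → Θ), Function.Injective v →
      ∑ j, w (v j) (v (j + 1)) ≤ 0) :
    ∀ (n : ℕ) (l : List Θ) (a : Θ), l.length ≤ n → Wsum w (a :: l ++ [a]) ≤ 0 := by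
  intro n
  induction n with
  | zero =>
    intro l a hl
    have : l = [] := List.length_eq_zero_iff.mp (Nat.le_zero.mp hl)
    simp [this, hzero]
  | succ n ih =>
    intro l a hl
    by_cases hnd : (a :: l).Nodup
    · -- simple cycle case
      cases l with
      | nil => simp [hzero]
      | cons b t =>
        set N := t.length with hN
        let v : Fin (N + 2) → Θ := (a :: b :: t).get
        have hinj : Function.Injective v := List.nodup_iff_injective_get.mp hnd
        have hv0 : v 0 = a := rfl
        have hofn : (a :: b :: t : List Θ) = List.ofFn v := (List.ofFn_get _).symm
        have key : (a :: b :: t) ++ [a] = List.ofFn (Fin.snoc v a) := by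
          rw [List.ofFn_succ' (Fin.snoc v a)]
          simp only [Fin.snoc_castSucc, Fin.snoc_last, List.concat_eq_append]
          rw [← hofn]
        have hsucc : ∀ i : Fin (N + 2), (Fin.snoc v a : Fin (N + 3) → Θ) i.succ = v (i + 1) := by
          intro i
          rcases Fin.eq_castSucc_or_eq_last i with ⟨j, rfl⟩ | rfl
          · rw [Fin.succ_castSucc, Fin.snoc_castSucc]
            congr 1
            ext
            simp [Fin.val_add_one_of_lt (Fin.castSucc_lt_last j)]
          · rw [Fin.succ_last, Fin.snoc_last, Fin.last_add_one, hv0]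
        have := hcyc N v hinj
        calc Wsum w ((a :: b :: t) ++ [a])
            = ∑ i : Fin (N + 2), w (v i) (v (i + 1)) := by
              rw [key, Wsum_ofFn w (N + 2) (Fin.snoc v a)]
              apply Finset.sum_congr rfl
              intro i _
              rw [Fin.snoc_castSucc, hsucc]
          _ ≤ 0 := this
    · obtain ⟨p, x, m, s, hdecomp⟩ := exists_dup hnd
      -- full walk
      have hfull : (a :: l) ++ [a] = p ++ x :: (m ++ x :: (s ++ [a])) := by
        rw [hdecomp]; simp
      -- head of p ++ x :: s is a
      have hhead : ∃ l₁, p ++ x :: s = a :: l₁ ∧ l₁.length ≤ n := by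
        have hlen := congrArg List.length hdecomp
        simp only [List.length_cons, List.length_append] at hlen
        cases p with
        | nil =>
          have hx : a = x := by simpa using congrArg (List.head? ·) hdecomp
          exact ⟨s, by rw [← hx]; simp, by omega⟩
        | cons c p' =>
          have hc : c = a := by
            have := congrArg (List.head? ·) hdecomp
            simpa using this.symm
          exact ⟨p' ++ x :: s, by rw [hc]; simp,
            by simp only [List.length_cons, List.length_append] at hlen ⊢; omega⟩
      obtain ⟨l₁, hl₁, hl₁len⟩ := hhead
      have hmid : Wsum w (x :: m ++ [x]) ≤ 0 := by
        apply ih m x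
        have hlen := congrArg List.length hdecomp
        simp only [List.length_cons, List.length_append] at hlen
        omega
      have hred : Wsum w ((a :: l₁) ++ [a]) ≤ 0 := ih l₁ a hl₁len
      have heq : Wsum w ((a :: l) ++ [a])
          = Wsum w ((a :: l₁) ++ [a]) + Wsum w (x :: m ++ [x]) := by
        rw [hfull, Wsum_split w p x (m ++ x :: (s ++ [a]))]
        rw [show (x :: (m ++ x :: (s ++ [a]))) = (x :: m) ++ x :: (s ++ [a]) by simp]
        rw [Wsum_split w (x :: m) x (s ++ [a])]
        have : (a :: l₁) ++ [a] = p ++ x :: (s ++ [a]) := by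
          rw [← hl₁]; simp
        rw [this, Wsum_split w p x (s ++ [a])]
        ring
      linarith

lemma reduce_walk (hzero : ∀ a, w a a = 0)
    (hcyc : ∀ (k : ℕ) (v : Fin (k + 2) → Θ), Function.Injective v →
      ∑ j, w (v j) (v (j + 1)) ≤ 0) :
    ∀ (n : ℕ) (l : List Θ) (a b : Θ), l.length ≤ n →
      ∃ l', l'.Nodup ∧ Wsum w (a :: l ++ [b]) ≤ Wsum w (a :: l' ++ [b]) := by
  intro n
  induction n with
  | zero =>
    intro l a b hl
    exact ⟨l, by simp [List.length_eq_zero_iff.mp (Nat.le_zero.mp hl)], le_rfl⟩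
  | succ n ih =>
    intro l a b hl
    by_cases hnd : l.Nodup
    · exact ⟨l, hnd, le_rfl⟩
    · obtain ⟨p, x, m, s, rfl⟩ := exists_dup hnd
      have hlen : p.length + (m.length + (s.length + 1) + 1) ≤ n + 1 := by
        simpa [List.length_append] using hl
      have hmid : Wsum w (x :: m ++ [x]) ≤ 0 :=
        cycle_le hzero hcyc n m x (by omega)
      have heq : Wsum w (a :: (p ++ x :: m ++ x :: s) ++ [b])
          = Wsum w (a :: (p ++ x :: s) ++ [b]) + Wsum w (x :: m ++ [x]) := by
        have h1 : a :: (p ++ x :: m ++ x :: s) ++ [b]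
            = (a :: p) ++ x :: (m ++ x :: (s ++ [b])) := by simp
        have h2 : a :: (p ++ x :: s) ++ [b] = (a :: p) ++ x :: (s ++ [b]) := by simp
        rw [h1, h2, Wsum_split w (a :: p) x (m ++ x :: (s ++ [b])),
          Wsum_split w (a :: p) x (s ++ [b])]
        rw [show (x :: (m ++ x :: (s ++ [b]))) = (x :: m) ++ x :: (s ++ [b]) by simp]
        rw [Wsum_split w (x :: m) x (s ++ [b])]
        ring
      obtain ⟨l', hnd', hle'⟩ := ih (p ++ x :: s) a b
        (by simp only [List.length_append, List.length_cons]; omega)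
      exact ⟨l', hnd', by linarith⟩

theorem exists_potential (hzero : ∀ a, w a a = 0)
    (hcyc : ∀ (k : ℕ) (v : Fin (k + 2) → Θ), Function.Injective v →
      ∑ j, w (v j) (v (j + 1)) ≤ 0) :
    ∃ T : Θ → ℝ, ∀ a b, w a b ≤ T b - T a := by
  obtain ⟨M0, hM0⟩ := Finite.exists_le fun p : Θ × Θ => w p.1 p.2
  set M : ℝ := max M0 0 with hM
  have hMw : ∀ a b : Θ, w a b ≤ M := fun a b => le_trans (hM0 (a, b)) (le_max_left _ _)
  have hM0' : (0 : ℝ) ≤ M := le_max_right _ _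
  have hbound : ∀ l : List Θ, Wsum w l ≤ l.length * M := by
    intro l
    induction l with
    | nil => simp
    | cons c t ih =>
      cases t with
      | nil => simpa using hM0'
      | cons d t' =>
        rw [Wsum_cons_cons]
        have h1 := hMw c d
        simp only [List.length_cons] at ih ⊢
        push_cast at ih ⊢
        nlinarith [ih, h1]
  set θ0 : Θ := Classical.arbitrary Θ with hθ0
  set S : Θ → Set ℝ := fun θ => Set.range (fun l : List Θ => Wsum w (θ0 :: l ++ [θ])) with hS
  have hne : ∀ θ, (S θ).Nonempty := fun θ => ⟨_, ⟨[], rfl⟩⟩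
  have hbdd : ∀ θ, BddAbove (S θ) := by
    intro θ
    refine ⟨(Fintype.card Θ + 2) * M, ?_⟩
    rintro r ⟨l, rfl⟩
    obtain ⟨l', hnd, hle⟩ := reduce_walk hzero hcyc l.length l θ0 θ le_rfl
    have h1 : Wsum w (θ0 :: l' ++ [θ]) ≤ ((θ0 :: l' ++ [θ]).length : ℝ) * M :=
      hbound _
    have h2 : (θ0 :: l' ++ [θ]).length = l'.length + 2 := by simp
    have h3 : l'.length ≤ Fintype.card Θ := List.Nodup.length_le_card hnd
    have h4 : ((l'.length : ℝ) + 2) * M ≤ ((Fintype.card Θ : ℝ) + 2) * M := by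
      apply mul_le_mul_of_nonneg_right _ hM0'
      have : (l'.length : ℝ) ≤ (Fintype.card Θ : ℝ) := by exact_mod_cast h3
      linarith
    calc Wsum w (θ0 :: l ++ [θ]) ≤ Wsum w (θ0 :: l' ++ [θ]) := hle
      _ ≤ ((l'.length : ℝ) + 2) * M := by rw [h2] at h1; push_cast at h1; exact h1
      _ ≤ ((Fintype.card Θ : ℝ) + 2) * M := h4
  refine ⟨fun θ => sSup (S θ), ?_⟩
  intro a b
  have step : ∀ r ∈ S a, r + w a b ∈ S b := by
    rintro r ⟨l, rfl⟩
    refine ⟨l ++ [a], ?_⟩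
    simp only
    have h1 : θ0 :: (l ++ [a]) ++ [b] = (θ0 :: l) ++ a :: [b] := by simp
    rw [h1, Wsum_split w (θ0 :: l) a [b]]
    simp
  have key : sSup (S a) ≤ sSup (S b) - w a b := by
    apply csSup_le (hne a)
    intro r hr
    have := le_csSup (hbdd b) (step r hr)
    linarith
  linarith

end Potential

theorem cyclMono_iff_implementable' {Θ X : Type*}
    [Fintype Θ] [Fintype X] [Nonempty Θ] [Nonempty X]
    (u : X × Θ → ℝ) (x : Θ → X → ℝ) :
    (∀ J : ℕ, ∀ θs : Fin (J + 2) → Θ, Function.Injective θs →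
      ∑ j, ubar u (x (θs (j + 1))) (θs j) ≤ ∑ j, ubar u (x (θs j)) (θs j)) ↔
      ∃ T : Θ → ℝ, ∀ θ θ' : Θ,
        ubar u (x θ') θ - T θ' ≤ ubar u (x θ) θ - T θ := by
  constructor
  · intro hcm
    set w : Θ → Θ → ℝ := fun θ θ' => ubar u (x θ') θ - ubar u (x θ) θ with hw
    have hzero : ∀ a, w a a = 0 := fun a => by simp [hw]
    have hcyc : ∀ (k : ℕ) (v : Fin (k + 2) → Θ), Function.Injective v →
        ∑ j, w (v j) (v (j + 1)) ≤ 0 := by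
      intro k v hv
      have := hcm k v hv
      simp only [hw]
      rw [Finset.sum_sub_distrib]
      linarith
    obtain ⟨T, hT⟩ := exists_potential hzero hcyc
    refine ⟨T, fun θ θ' => ?_⟩
    have := hT θ θ'
    simp only [hw] at this
    linarith
  · rintro ⟨T, hT⟩ J θs _
    have h : ∀ j : Fin (J + 2), ubar u (x (θs (j + 1))) (θs j)
        ≤ ubar u (x (θs j)) (θs j) - T (θs j) + T (θs (j + 1)) := fun j => by
      have := hT (θs j) (θs (j + 1)); linarith
    have hsumT : ∑ j : Fin (J + 2), T (θs (j + 1)) = ∑ j, T (θs j) :=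
      Fintype.sum_equiv (Equiv.addRight 1) _ _ (fun j => rfl)
    calc ∑ j, ubar u (x (θs (j + 1))) (θs j)
        ≤ ∑ j, (ubar u (x (θs j)) (θs j) - T (θs j) + T (θs (j + 1))) :=
          Finset.sum_le_sum fun j _ => h j
      _ = ∑ j, ubar u (x (θs j)) (θs j) := by
          rw [Finset.sum_add_distrib, Finset.sum_sub_distrib, hsumT]; ring

/-- Rochet. A social choice function is cyclically monotone
iff it is one-shot implementable with transfers. -/
theorem cyclMono_iff_implementable_with_transfers {Θ X : Type*}
    [Fintype Θ] [Fintype X] [Nonempty Θ] [Nonempty X]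
    (u : X × Θ → ℝ) (x : Θ → X → ℝ) :
    CyclMonoSCF u x ↔
      ∃ T : Θ → ℝ, ∀ θ θ' : Θ,
        ubar u (x θ') θ - T θ' ≤ ubar u (x θ) θ - T θ :=
  cyclMono_iff_implementable' u x
end

section
/- Let Θ be a finite nonempty set, π ∈ Δ(Θ), and K ≥ 1. For θ = (θ^1,…,θ^K) ∈ Θ^K drawn i.i.d. from π (i.e., under the product weight Π_{k=1}^K π(θ^k) on Θ^K), the expected total variation distance between π and the empirical distribution satisfies Σ_{θ∈Θ^K} (Π_k π(θ^k))·‖π − marg θ‖ ≤ (1/(2√K))·Σ_{θ'∈Θ} √(π(θ')·(1 − π(θ'))). -/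
open Finset

section Aux

variable {Θ : Type*} [Fintype Θ] [DecidableEq Θ]

lemma sum_prod_eq_prod_sum {K : ℕ} (f : Fin K → Θ → ℝ) :
    ∑ θv : Fin K → Θ, ∏ i, f i (θv i) = ∏ i, ∑ θ, f i θ := by
  rw [Finset.prod_univ_sum, Fintype.piFinset_univ]

lemma E_one {K : ℕ} (π : Θ → ℝ) (hπ : IsProbVec π) :
    ∑ θv : Fin K → Θ, ∏ i, π (θv i) = 1 := by
  rw [sum_prod_eq_prod_sum (fun _ => π)]
  simp [hπ.2]

lemma E_single {K : ℕ} (π : Θ → ℝ) (hπ : IsProbVec π) (θ' : Θ) (k : Fin K) :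
    ∑ θv : Fin K → Θ, (∏ i, π (θv i)) * (if θv k = θ' then (1:ℝ) else 0) = π θ' := by
  have h : ∀ θv : Fin K → Θ, (∏ i, π (θv i)) * (if θv k = θ' then (1:ℝ) else 0)
      = ∏ i, (π (θv i) * (if i = k then (if θv i = θ' then (1:ℝ) else 0) else 1)) := by
    intro θv
    rw [Finset.prod_mul_distrib]
    congr 1
    simp [Finset.prod_ite_eq']
  rw [Finset.sum_congr rfl (fun θv _ => h θv),
    sum_prod_eq_prod_sum (fun i θ => π θ * (if i = k then (if θ = θ' then (1:ℝ) else 0) else 1))]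
  have h2 : ∀ i : Fin K, (∑ θ, π θ * (if i = k then (if θ = θ' then (1:ℝ) else 0) else 1))
      = if i = k then π θ' else 1 := by
    intro i
    by_cases hik : i = k
    · simp [hik, mul_ite, Finset.sum_ite_eq']
    · simp [hik, hπ.2]
  rw [Finset.prod_congr rfl (fun i _ => h2 i)]
  simp [Finset.prod_ite_eq']

lemma E_pair {K : ℕ} (π : Θ → ℝ) (hπ : IsProbVec π) (θ' : Θ) (k l : Fin K)
    (hkl : k ≠ l) :
    ∑ θv : Fin K → Θ, (∏ i, π (θv i)) * (if θv k = θ' then (1:ℝ) else 0)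
      * (if θv l = θ' then (1:ℝ) else 0) = π θ' * π θ' := by
  have h : ∀ θv : Fin K → Θ, (∏ i, π (θv i)) * (if θv k = θ' then (1:ℝ) else 0)
      * (if θv l = θ' then (1:ℝ) else 0)
      = ∏ i, (π (θv i) * (if i = k then (if θv i = θ' then (1:ℝ) else 0) else 1)
          * (if i = l then (if θv i = θ' then (1:ℝ) else 0) else 1)) := by
    intro θv
    rw [Finset.prod_mul_distrib, Finset.prod_mul_distrib]
    simp [Finset.prod_ite_eq']
  rw [Finset.sum_congr rfl (fun θv _ => h θv),
    sum_prod_eq_prod_sum (fun i θ => π θ * (if i = k then (if θ = θ' then (1:ℝ) else 0) else 1)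
      * (if i = l then (if θ = θ' then (1:ℝ) else 0) else 1))]
  have h2 : ∀ i : Fin K, (∑ θ, π θ * (if i = k then (if θ = θ' then (1:ℝ) else 0) else 1)
      * (if i = l then (if θ = θ' then (1:ℝ) else 0) else 1))
      = (if i = k then π θ' else 1) * (if i = l then π θ' else 1) := by
    intro i
    by_cases hik : i = k
    · have hil : i ≠ l := hik ▸ hkl
      simp [hik, hil, hkl, mul_ite, Finset.sum_ite_eq']
    · by_cases hil : i = l
      · simp [hik, hil, Ne.symm hkl, mul_ite, Finset.sum_ite_eq']
      · simp [hik, hil, hπ.2]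
  rw [Finset.prod_congr rfl (fun i _ => h2 i), Finset.prod_mul_distrib]
  simp [Finset.prod_ite_eq']

end Aux

/-- Expected total variation distance between the prior `π`
and the empirical distribution of `K` i.i.d. draws from `π` is bounded by
`(1/(2√K))·Σ_{θ'} √(π(θ')(1 − π(θ')))`. -/
theorem expected_tv_empirical_bound {Θ : Type*} [Fintype Θ] [Nonempty Θ]
    [DecidableEq Θ]
    (π : Θ → ℝ) (hπ : IsProbVec π) (K : ℕ) (hK : 1 ≤ K) :
    ∑ θv : Fin K → Θ, (∏ k, π (θv k)) * tv π (marg K θv) ≤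
      (1 / (2 * Real.sqrt K)) * ∑ θ', Real.sqrt (π θ' * (1 - π θ')) := by
  have hK0 : (0:ℝ) < K := by exact_mod_cast hK
  have hsK : (0:ℝ) < Real.sqrt K := Real.sqrt_pos.mpr hK0
  set W : (Fin K → Θ) → ℝ := fun θv => ∏ i, π (θv i) with hWdef
  have hW0 : ∀ θv, 0 ≤ W θv := fun θv => Finset.prod_nonneg (fun i _ => hπ.1 _)
  set N : Θ → (Fin K → Θ) → ℝ :=
    fun θ' θv => ∑ k, if θv k = θ' then (1:ℝ) else 0 with hNdef
  have hmarg : ∀ θ' θv, marg K θv θ' = N θ' θv / K := by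
    intro θ' θv
    unfold marg
    rw [Finset.card_filter]
    push_cast
    rfl
  -- first moment
  have hEN : ∀ θ', ∑ θv, W θv * N θ' θv = K * π θ' := by
    intro θ'
    have : ∀ θv, W θv * N θ' θv = ∑ k, W θv * (if θv k = θ' then (1:ℝ) else 0) := by
      intro θv; rw [Finset.mul_sum]
    rw [Finset.sum_congr rfl (fun θv _ => this θv), Finset.sum_comm]
    rw [Finset.sum_congr rfl (fun k _ => E_single π hπ θ' k)]
    simp [mul_comm]
  -- second moment
  have hENN : ∀ θ', ∑ θv, W θv * (N θ' θv * N θ' θv)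
      = (K:ℝ)^2 * (π θ')^2 + K * π θ' - K * (π θ')^2 := by
    intro θ'
    have step1 : ∀ θv, W θv * (N θ' θv * N θ' θv)
        = ∑ k, ∑ l, W θv * (if θv k = θ' then (1:ℝ) else 0) * (if θv l = θ' then (1:ℝ) else 0) := by
      intro θv
      rw [hNdef]
      rw [Finset.sum_mul_sum]
      rw [Finset.mul_sum]
      exact Finset.sum_congr rfl (fun k _ => by rw [Finset.mul_sum]; exact Finset.sum_congr rfl (fun l _ => by ring))
    rw [Finset.sum_congr rfl (fun θv _ => step1 θv), Finset.sum_comm]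
    have step2 : ∀ k : Fin K, ∑ θv : Fin K → Θ, ∑ l,
        W θv * (if θv k = θ' then (1:ℝ) else 0) * (if θv l = θ' then (1:ℝ) else 0)
        = ∑ l, ∑ θv : Fin K → Θ,
          W θv * (if θv k = θ' then (1:ℝ) else 0) * (if θv l = θ' then (1:ℝ) else 0) :=
      fun k => Finset.sum_comm
    rw [Finset.sum_congr rfl (fun k _ => step2 k)]
    have step3 : ∀ k l : Fin K, ∑ θv : Fin K → Θ,
        W θv * (if θv k = θ' then (1:ℝ) else 0) * (if θv l = θ' then (1:ℝ) else 0)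
        = if k = l then π θ' else π θ' * π θ' := by
      intro k l
      by_cases hkl : k = l
      · subst hkl
        simp only [if_pos rfl]
        have : ∀ θv : Fin K → Θ, W θv * (if θv k = θ' then (1:ℝ) else 0)
            * (if θv k = θ' then (1:ℝ) else 0) = W θv * (if θv k = θ' then (1:ℝ) else 0) := by
          intro θv; by_cases h : θv k = θ' <;> simp [h]
        rw [Finset.sum_congr rfl (fun θv _ => this θv)]
        exact E_single π hπ θ' k
      · rw [if_neg hkl]
        exact E_pair π hπ θ' k l hkl
    rw [Finset.sum_congr rfl (fun k _ =>
      Finset.sum_congr rfl (fun l _ => step3 k l))]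
    have step4 : ∀ k : Fin K, ∑ l : Fin K, (if k = l then π θ' else π θ' * π θ')
        = K * (π θ' * π θ') + (π θ' - π θ' * π θ') := by
      intro k
      have : ∀ l : Fin K, (if k = l then π θ' else π θ' * π θ')
          = π θ' * π θ' + (if k = l then π θ' - π θ' * π θ' else 0) := by
        intro l; by_cases h : k = l <;> simp [h]
      rw [Finset.sum_congr rfl (fun l _ => this l), Finset.sum_add_distrib]
      simp [Finset.sum_ite_eq, mul_comm]
    rw [Finset.sum_congr rfl (fun k _ => step4 k)]
    simp only [Finset.sum_const, Finset.card_univ, Fintype.card_fin, nsmul_eq_mul]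
    ring
  -- variance
  have hVar : ∀ θ', ∑ θv, W θv * (N θ' θv - K * π θ')^2 = K * (π θ' * (1 - π θ')) := by
    intro θ'
    have expand : ∀ θv, W θv * (N θ' θv - K * π θ')^2
        = W θv * (N θ' θv * N θ' θv) - 2*(K * π θ')*(W θv * N θ' θv)
          + (K * π θ')^2 * W θv := by
      intro θv; ring
    rw [Finset.sum_congr rfl (fun θv _ => expand θv), Finset.sum_add_distrib,
      Finset.sum_sub_distrib, ← Finset.mul_sum, ← Finset.mul_sum, hENN, hEN]
    have h1 : ∑ θv, W θv = 1 := E_one π hπ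
    rw [h1]
    ring
  have hple : ∀ θ', π θ' ≤ 1 := fun θ' =>
    hπ.2 ▸ Finset.single_le_sum (fun i _ => hπ.1 i) (Finset.mem_univ θ')
  -- Cauchy-Schwarz
  have hCS : ∀ θ', ∑ θv, W θv * |N θ' θv - K * π θ'|
      ≤ Real.sqrt K * Real.sqrt (π θ' * (1 - π θ')) := by
    intro θ'
    have h1 := Finset.sum_mul_sq_le_sq_mul_sq Finset.univ
      (fun θv => Real.sqrt (W θv))
      (fun θv => Real.sqrt (W θv) * |N θ' θv - K * π θ'|)
    have e1 : ∀ θv : Fin K → Θ, Real.sqrt (W θv) * (Real.sqrt (W θv) * |N θ' θv - K * π θ'|)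
        = W θv * |N θ' θv - K * π θ'| := by
      intro θv; rw [← mul_assoc, Real.mul_self_sqrt (hW0 θv)]
    have e2 : ∀ θv : Fin K → Θ, (Real.sqrt (W θv))^2 = W θv :=
      fun θv => Real.sq_sqrt (hW0 θv)
    have e3 : ∀ θv : Fin K → Θ, (Real.sqrt (W θv) * |N θ' θv - K * π θ'|)^2
        = W θv * (N θ' θv - K * π θ')^2 := by
      intro θv; rw [mul_pow, Real.sq_sqrt (hW0 θv), sq_abs]
    simp only [e1, e2, e3] at h1
    rw [E_one π hπ, one_mul, hVar θ'] at h1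
    have hnn : 0 ≤ ∑ θv, W θv * |N θ' θv - K * π θ'| :=
      Finset.sum_nonneg (fun θv _ => mul_nonneg (hW0 θv) (abs_nonneg _))
    have hy : (0:ℝ) ≤ K * (π θ' * (1 - π θ')) :=
      mul_nonneg hK0.le (mul_nonneg (hπ.1 θ') (by linarith [hple θ']))
    have := (Real.le_sqrt hnn hy).mpr h1
    rwa [Real.sqrt_mul (le_of_lt hK0)] at this
  -- assembly
  have key : ∑ θv : Fin K → Θ, (∏ k, π (θv k)) * tv π (marg K θv)
      = (∑ θ', (∑ θv, W θv * |N θ' θv - K * π θ'|) / K) / 2 := by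
    unfold tv
    have e : ∀ θv : Fin K → Θ, (∏ k, π (θv k)) * ((∑ θ', |π θ' - marg K θv θ'|) / 2)
        = (∑ θ', W θv * |N θ' θv - K * π θ'| / K) / 2 := by
      intro θv
      rw [mul_div_assoc']
      congr 1
      rw [Finset.mul_sum]
      refine Finset.sum_congr rfl (fun θ' _ => ?_)
      rw [hmarg θ' θv]
      have : |π θ' - N θ' θv / K| = |N θ' θv - K * π θ'| / K := by
        rw [abs_sub_comm, ← abs_of_pos hK0, ← abs_div]
        congr 1
        field_simp
        rw [abs_of_pos hK0]; ring
      rw [this, mul_div_assoc]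
    rw [Finset.sum_congr rfl (fun θv _ => e θv), ← Finset.sum_div]
    congr 1
    rw [Finset.sum_comm]
    exact Finset.sum_congr rfl (fun θ' _ => by rw [Finset.sum_div])
  rw [key]
  have bound : ∑ θ', (∑ θv, W θv * |N θ' θv - K * π θ'|) / K
      ≤ ∑ θ', (Real.sqrt K * Real.sqrt (π θ' * (1 - π θ'))) / K :=
    Finset.sum_le_sum (fun θ' _ => by gcongr; exact hCS θ')
  calc (∑ θ', (∑ θv, W θv * |N θ' θv - K * π θ'|) / K) / 2
      ≤ (∑ θ', (Real.sqrt K * Real.sqrt (π θ' * (1 - π θ'))) / K) / 2 := by linarith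
    _ = (1 / (2 * Real.sqrt K)) * ∑ θ', Real.sqrt (π θ' * (1 - π θ')) := by
        rw [← Finset.sum_div, ← Finset.mul_sum, div_div,
          mul_comm (1 / (2 * Real.sqrt (K:ℝ))), mul_one_div,
          div_eq_div_iff (by positivity) (by positivity)]
        have hKK : Real.sqrt K * Real.sqrt K = (K:ℝ) := Real.mul_self_sqrt (le_of_lt hK0)
        linear_combination 2 * (∑ θ', Real.sqrt (π θ' * (1 - π θ'))) * hKK
end
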